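/- arXiv:2010.15522 — 6 statements merged into one kernel-verified Lean document; each statement's English description precedes it below -/
import Mathlib

section
/- For a double-broom consisting of a path with n − 2s vertices and s pendant leaves attached at each endpoint, the sum of the orders of all subtrees equals 2^{2s}(n − s) + 2^s(n − s)(n − 2s − 1) + C(n−2s, 3) + 2s. -/
open scoped Classical

/-- The subtrees (nonempty connected induced subgraphs) of a graph, as vertex sets. -/
noncomputable def subtrees {V : Type*} [Fintype V] (G : SimpleGraph V) :
    Finset (Finset V) :=
  Finset.univ.filter (fun s => s.Nonempty ∧ (G.induce (s : Set V)).Connected)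

/-- The double-broom on `n` vertices: vertices `0,…,n−2s−1` form a path, vertices
`n−2s,…,n−s−1` are leaves attached to the endpoint `0` of the path, and vertices
`n−s,…,n−1` are leaves attached to the other endpoint `n−2s−1`. -/
def doubleBroom (n s : ℕ) : SimpleGraph (Fin n) :=
  SimpleGraph.fromRel (fun i j =>
    (i.val + 1 = j.val ∧ j.val < n - 2 * s) ∨
    (i.val = 0 ∧ n - 2 * s ≤ j.val ∧ j.val < n - 2 * s + s) ∨
    (i.val = n - 2 * s - 1 ∧ n - 2 * s + s ≤ j.val))

namespace DBproof
open Finset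

def rel' (p s i j : ℕ) : Prop :=
  (i + 1 = j ∧ j < p) ∨ (i = 0 ∧ p ≤ j ∧ j < p + s) ∨ (i = p - 1 ∧ p + s ≤ j)

lemma adj_iff {p s : ℕ} (x y : Fin (p + 2*s)) :
    (doubleBroom (p + 2*s) s).Adj x y ↔
      x.val ≠ y.val ∧ (rel' p s x.val y.val ∨ rel' p s y.val x.val) := by
  have h1 : p + 2*s - 2*s = p := by omega
  simp only [doubleBroom, SimpleGraph.fromRel_adj, rel', h1, ne_eq, Fin.ext_iff]

lemma no_cross {V : Type*} [Fintype V] {G : SimpleGraph V} {t : Finset V}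
    (hconn : (G.induce (t : Set V)).Connected) {u v : V} (hu : u ∈ t) (hv : v ∈ t)
    (S : Set V) (huS : u ∈ S) (hvS : v ∉ S) :
    ∃ x y, x ∈ t ∧ y ∈ t ∧ G.Adj x y ∧ x ∈ S ∧ y ∉ S := by
  have hreach := hconn.preconnected ⟨u, by simp [hu]⟩ ⟨v, by simp [hv]⟩
  obtain ⟨w⟩ := hreach
  obtain ⟨d, _, hdS, hdS'⟩ := w.exists_boundary_dart (Subtype.val ⁻¹' S) huS hvS
  exact ⟨d.fst.val, d.snd.val, by simpa using d.fst.prop, by simpa using d.snd.prop,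
    d.adj, hdS, hdS'⟩

variable {p s : ℕ}

lemma interval_mem {t : Finset (Fin (p + 2*s))}
    (hconn : ((doubleBroom (p + 2*s) s).induce (t : Set (Fin (p+2*s)))).Connected)
    {u v : Fin (p + 2*s)} (hu : u ∈ t) (hv : v ∈ t) (hvp : v.val < p)
    {k : ℕ} (hk : k < p + 2*s) (h1 : u.val < k) (h2 : k < v.val) :
    (⟨k, hk⟩ : Fin (p + 2*s)) ∈ t := by
  by_contra hkt
  obtain ⟨x, y, hxt, hyt, hadj, hxS, hyS⟩ := no_cross hconn hu hv
    {z : Fin (p + 2*s) | z.val < k ∨ (p ≤ z.val ∧ z.val < p + s)}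
    (by simp only [Set.mem_setOf_eq]; omega) (by simp only [Set.mem_setOf_eq]; omega)
  rw [adj_iff] at hadj
  have hxk : x.val ≠ k := fun h => hkt (by simpa [← h] using hxt)
  have hyk : y.val ≠ k := fun h => hkt (by simpa [← h] using hyt)
  simp only [Set.mem_setOf_eq] at hxS hyS
  have hxn : x.val < p + 2*s := x.isLt
  have hyn : y.val < p + 2*s := y.isLt
  obtain ⟨hne, hrel⟩ := hadj
  unfold rel' at hrel
  omega

lemma leaf_attach {t : Finset (Fin (p + 2*s))} (hp : 2 ≤ p)
    (hconn : ((doubleBroom (p + 2*s) s).induce (t : Set (Fin (p+2*s)))).Connected)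
    {w v : Fin (p + 2*s)} (hw : w ∈ t) (hv : v ∈ t) (hwp : p ≤ w.val) (hne : v ≠ w) :
    (w.val < p + s ∧ (⟨0, by omega⟩ : Fin (p+2*s)) ∈ t) ∨
    (p + s ≤ w.val ∧ (⟨p - 1, by omega⟩ : Fin (p+2*s)) ∈ t) := by
  obtain ⟨x, y, hxt, hyt, hadj, hxS, hyS⟩ := no_cross hconn hw hv
    {z : Fin (p + 2*s) | z = w} rfl hne
  simp only [Set.mem_setOf_eq] at hxS hyS
  rw [hxS] at hadj
  rw [adj_iff] at hadj
  obtain ⟨hne', hrel⟩ := hadj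
  have hyn : y.val < p + 2*s := y.isLt
  rcases Nat.lt_or_ge w.val (p + s) with h | h
  · left
    refine ⟨h, ?_⟩
    have : y.val = 0 := by unfold rel' at hrel; omega
    have : y = ⟨0, by omega⟩ := Fin.ext this
    rwa [← this]
  · right
    refine ⟨h, ?_⟩
    have : y.val = p - 1 := by unfold rel' at hrel; omega
    have : y = ⟨p - 1, by omega⟩ := Fin.ext this
    rwa [← this]

def lift (p s : ℕ) (N : Finset ℕ) : Finset (Fin (p + 2*s)) :=
  Finset.univ.filter (fun v => v.val ∈ N)

lemma mem_lift {N : Finset ℕ} {v : Fin (p + 2*s)} : v ∈ lift p s N ↔ v.val ∈ N := by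
  simp [lift]

def g (p s a b : ℕ) (A B : Finset ℕ) : Finset ℕ :=
  Finset.Icc a b ∪ A.image (· + p) ∪ B.image (· + (p + s))

def S1 (p s : ℕ) : Finset ((ℕ × ℕ) × Finset ℕ × Finset ℕ) :=
  ((range p ×ˢ range p) ×ˢ (range s).powerset ×ˢ (range s).powerset).filter
    (fun q => q.1.1 ≤ q.1.2 ∧ (q.1.1 = 0 ∨ q.2.1 = ∅) ∧ (q.1.2 = p - 1 ∨ q.2.2 = ∅))

noncomputable def F (p s : ℕ) : (ℕ × ℕ) × Finset ℕ × Finset ℕ ⊕ ℕ → Finset (Fin (p+2*s))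
  | .inl q => lift p s (g p s q.1.1 q.1.2 q.2.1 q.2.2)
  | .inr ℓ => lift p s {p + ℓ}

lemma forward (hp : 2 ≤ p) {t : Finset (Fin (p + 2*s))}
    (ht : t ∈ subtrees (doubleBroom (p + 2*s) s)) :
    t ∈ ((S1 p s).disjSum (range (2*s))).image (F p s) := by
  simp only [subtrees, mem_filter, mem_univ, true_and] at ht
  obtain ⟨ht1, ht2⟩ := ht
  set tP := t.filter (fun v => v.val < p) with htP
  have hmemtP : ∀ v : Fin (p+2*s), v ∈ tP ↔ (v ∈ t ∧ v.val < p) := by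
    intro v; rw [htP, mem_filter]
  rcases tP.eq_empty_or_nonempty with hP | hP
  · -- no path vertices: t is a leaf singleton
    have hallp : ∀ v ∈ t, p ≤ v.val := by
      intro v hv
      by_contra h
      have : v ∈ tP := (hmemtP v).mpr ⟨hv, by omega⟩
      simp [hP] at this
    obtain ⟨w, hw⟩ := ht1
    have hwp : p ≤ w.val := hallp w hw
    have huniq : ∀ x ∈ t, x = w := by
      intro x hx
      by_contra hxw
      rcases leaf_attach hp ht2 hw hx hwp hxw with ⟨_, h0⟩ | ⟨_, h0⟩
      · have := hallp _ h0; simp at this; omega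
      · have := hallp _ h0; simp at this; omega
    have htw : t = {w} := eq_singleton_iff_unique_mem.mpr ⟨hw, huniq⟩
    rw [mem_image]
    refine ⟨.inr (w.val - p), ?_, ?_⟩
    · rw [Finset.mem_disjSum]
      right
      refine ⟨w.val - p, ?_, rfl⟩
      have := w.isLt
      simp only [mem_range]
      omega
    · simp only [F]
      rw [htw]
      ext v
      simp only [mem_singleton, mem_lift, Finset.mem_singleton]
      constructor
      · intro h; exact Fin.ext (by omega)
      · intro h; rw [h]; omega
  · -- has path vertices
    set a := tP.min' hP with ha
    set b := tP.max' hP with hb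
    have hamem : a ∈ tP := by rw [ha]; exact tP.min'_mem hP
    have hbmem : b ∈ tP := by rw [hb]; exact tP.max'_mem hP
    have hale : ∀ v ∈ tP, a ≤ v := fun v hv => tP.min'_le v hv
    have hble : ∀ v ∈ tP, v ≤ b := fun v hv => tP.le_max' v hv
    rw [hmemtP] at hamem hbmem
    obtain ⟨hat, hap⟩ := hamem
    obtain ⟨hbt, hbp⟩ := hbmem
    have hab : a.val ≤ b.val := hale b ((hmemtP b).mpr ⟨hbt, hbp⟩)
    set A := ((t.filter (fun v => p ≤ v.val ∧ v.val < p+s)).image (fun v => v.val - p)) with hA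
    set B := ((t.filter (fun v => p+s ≤ v.val)).image (fun v => v.val - (p+s))) with hB
    have hA0 : A.Nonempty → a.val = 0 := by
      rintro ⟨c, hc⟩
      rw [hA, mem_image] at hc
      obtain ⟨w, hw, hwc⟩ := hc
      rw [mem_filter] at hw
      obtain ⟨hwt, hwp1, hwp2⟩ := hw
      have hne : a ≠ w := by
        intro h
        have := congrArg Fin.val h
        omega
      rcases leaf_attach hp ht2 hwt hat hwp1 hne with ⟨_, h0⟩ | ⟨h1, _⟩
      · have h0' : (⟨0, by omega⟩ : Fin (p+2*s)) ∈ tP := (hmemtP _).mpr ⟨h0, by simp; omega⟩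
        have := hale _ h0'
        rw [Fin.le_def] at this
        simpa using Nat.le_antisymm this (Nat.zero_le _)
      · omega
    have hB0 : B.Nonempty → b.val = p - 1 := by
      rintro ⟨c, hc⟩
      rw [hB, mem_image] at hc
      obtain ⟨w, hw, hwc⟩ := hc
      rw [mem_filter] at hw
      obtain ⟨hwt, hwp1⟩ := hw
      have hne : b ≠ w := by
        intro h
        have := congrArg Fin.val h
        omega
      rcases leaf_attach hp ht2 hwt hbt (by omega) hne with ⟨h1, _⟩ | ⟨_, h0⟩
      · omega
      · have h0' : (⟨p-1, by omega⟩ : Fin (p+2*s)) ∈ tP := (hmemtP _).mpr ⟨h0, by simp; omega⟩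
        have := hble _ h0'
        rw [Fin.le_def] at this
        simp at this
        omega
    have hAs : A ⊆ range s := by
      intro c hc
      rw [hA, mem_image] at hc
      obtain ⟨w, hw, hwc⟩ := hc
      rw [mem_filter] at hw
      simp only [mem_range]
      omega
    have hBs : B ⊆ range s := by
      intro c hc
      rw [hB, mem_image] at hc
      obtain ⟨w, hw, hwc⟩ := hc
      rw [mem_filter] at hw
      have := w.isLt
      simp only [mem_range]
      omega
    rw [mem_image]
    refine ⟨.inl ((a.val, b.val), A, B), ?_, ?_⟩
    · rw [Finset.mem_disjSum]
      left
      refine ⟨((a.val, b.val), A, B), ?_, rfl⟩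
      rw [S1, mem_filter]
      refine ⟨?_, hab, ?_, ?_⟩
      · simp only [mem_product, mem_range, mem_powerset]
        exact ⟨⟨hap, hbp⟩, hAs, hBs⟩
      · rcases A.eq_empty_or_nonempty with h | h
        · exact Or.inr h
        · exact Or.inl (hA0 h)
      · rcases B.eq_empty_or_nonempty with h | h
        · exact Or.inr h
        · exact Or.inl (hB0 h)
    · simp only [F]
      ext v
      rw [mem_lift]
      simp only [g, Finset.mem_union, Finset.mem_Icc, Finset.mem_image]
      constructor
      · rintro ((⟨h1, h2⟩ | ⟨c, hc, hcv⟩) | ⟨c, hc, hcv⟩)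
        · -- in the interval
          rcases Nat.lt_or_ge a.val v.val with ha1 | ha1
          · rcases Nat.lt_or_ge v.val b.val with hb1 | hb1
            · have := interval_mem ht2 hat hbt hbp v.isLt ha1 hb1
              have hv : v = ⟨v.val, v.isLt⟩ := Fin.ext rfl
              rwa [hv]
            · have : v = b := Fin.ext (by omega)
              rw [this]; exact hbt
          · have : v = a := Fin.ext (by omega)
            rw [this]; exact hat
        · rw [hA, mem_image] at hc
          obtain ⟨w, hw, hwc⟩ := hc
          rw [mem_filter] at hw
          have : v = w := Fin.ext (by omega)
          rw [this]; exact hw.1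
        · rw [hB, mem_image] at hc
          obtain ⟨w, hw, hwc⟩ := hc
          rw [mem_filter] at hw
          have : v = w := Fin.ext (by omega)
          rw [this]; exact hw.1
      · intro hv
        rcases Nat.lt_or_ge v.val p with h | h
        · have hvP : v ∈ tP := (hmemtP v).mpr ⟨hv, h⟩
          have h1 := hale v hvP
          have h2 := hble v hvP
          rw [Fin.le_def] at h1 h2
          exact Or.inl (Or.inl ⟨h1, h2⟩)
        · rcases Nat.lt_or_ge v.val (p+s) with h' | h'
          · refine Or.inl (Or.inr ⟨v.val - p, ?_, by omega⟩)
            rw [hA, mem_image]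
            exact ⟨v, mem_filter.mpr ⟨hv, h, h'⟩, rfl⟩
          · refine Or.inr ⟨v.val - (p+s), ?_, by omega⟩
            rw [hB, mem_image]
            exact ⟨v, mem_filter.mpr ⟨hv, h'⟩, rfl⟩

lemma reach_interval {t : Finset (Fin (p + 2*s))} {a : ℕ} (k : ℕ) (hk : k < p) (hak : a ≤ k)
    (hmem : ∀ m, a ≤ m → m ≤ k → ∀ (h : m < p + 2*s), (⟨m, h⟩ : Fin (p + 2*s)) ∈ t)
    (x y : (t : Set (Fin (p+2*s)))) (hx : (x : Fin (p+2*s)).val = a)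
    (hy : (y : Fin (p+2*s)).val = k) :
    ((doubleBroom (p + 2*s) s).induce (t : Set (Fin (p+2*s)))).Reachable x y := by
  induction k generalizing y with
  | zero =>
    have : a = 0 := by omega
    have : x = y := Subtype.ext (Fin.ext (by omega))
    rw [this]
  | succ k ih =>
    rcases Nat.lt_or_ge a (k+1) with h | h
    · have hak' : a ≤ k := by omega
      have hmid : (⟨k, by omega⟩ : Fin (p+2*s)) ∈ t := hmem k hak' (by omega) (by omega)
      have hr := ih (by omega) hak'
        (fun m h1 h2 h3 => hmem m h1 (by omega) h3) ⟨⟨k, by omega⟩, by simpa using hmid⟩ rfl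
      refine hr.trans (SimpleGraph.Adj.reachable ?_)
      show (doubleBroom (p + 2*s) s).Adj ⟨k, by omega⟩ (y : Fin (p+2*s))
      rw [adj_iff]
      unfold rel'
      simp only []
      omega
    · have : x = y := Subtype.ext (Fin.ext (by omega))
      rw [this]

lemma good_connected (hp : 2 ≤ p) {a b : ℕ} {A B : Finset ℕ} (hab : a ≤ b) (hbp : b < p)
    (hA : A ⊆ range s) (hB : B ⊆ range s) (hA0 : A.Nonempty → a = 0)
    (hB0 : B.Nonempty → b = p - 1) :
    ((doubleBroom (p + 2*s) s).induce ((lift p s (g p s a b A B) : Finset (Fin (p+2*s))) : Set (Fin (p+2*s)))).Connected := by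
  set t := lift p s (g p s a b A B) with ht
  have hmemIcc : ∀ m, a ≤ m → m ≤ b → ∀ (h : m < p + 2*s), (⟨m, h⟩ : Fin (p+2*s)) ∈ t := by
    intro m h1 h2 h
    rw [ht, mem_lift]
    simp [g, h1, h2]
  have hat : (⟨a, by omega⟩ : Fin (p+2*s)) ∈ t := hmemIcc a le_rfl hab (by omega)
  have key : ∀ (z : Fin (p+2*s)) (hz : z ∈ t),
      ((doubleBroom (p + 2*s) s).induce (t : Set (Fin (p+2*s)))).Reachable
        ⟨z, by simpa using hz⟩ ⟨⟨a, by omega⟩, by simpa using hat⟩ := by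
    intro z hz
    have hz' : z.val ∈ g p s a b A B := mem_lift.mp hz
    simp only [g, Finset.mem_union, Finset.mem_Icc, Finset.mem_image] at hz'
    rcases hz' with (⟨h1, h2⟩ | ⟨c, hc, hcz⟩) | ⟨c, hc, hcz⟩
    · exact (reach_interval (p := p) (s := s) (t := t) z.val (by omega) h1
        (fun m hm1 hm2 h => hmemIcc m hm1 (by omega) h)
        ⟨⟨a, by omega⟩, by simpa using hat⟩ ⟨z, by simpa using hz⟩ rfl rfl).symm
    · -- left leaf
      have ha0 : a = 0 := hA0 ⟨c, hc⟩
      have hcs : c < s := by simpa using hA hc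
      refine SimpleGraph.Adj.reachable ?_
      show (doubleBroom (p + 2*s) s).Adj z ⟨a, by omega⟩
      rw [adj_iff]
      unfold rel'
      simp only []
      omega
    · -- right leaf
      have hb1 : b = p - 1 := hB0 ⟨c, hc⟩
      have hcs : c < s := by simpa using hB hc
      have hbt : (⟨b, by omega⟩ : Fin (p+2*s)) ∈ t := hmemIcc b hab le_rfl (by omega)
      have step : ((doubleBroom (p + 2*s) s).induce (t : Set (Fin (p+2*s)))).Reachable
          ⟨z, by simpa using hz⟩ ⟨⟨b, by omega⟩, by simpa using hbt⟩ := by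
        refine SimpleGraph.Adj.reachable ?_
        show (doubleBroom (p + 2*s) s).Adj z ⟨b, by omega⟩
        rw [adj_iff]
        unfold rel'
        simp only []
        omega
      refine step.trans ?_
      exact (reach_interval (p := p) (s := s) (t := t) b hbp hab
        (fun m hm1 hm2 h => hmemIcc m hm1 (by omega) h)
        ⟨⟨a, by omega⟩, by simpa using hat⟩ ⟨⟨b, by omega⟩, by simpa using hbt⟩ rfl rfl).symm
  haveI : Nonempty ((t : Set (Fin (p+2*s)))) := ⟨⟨⟨a, by omega⟩, by simpa using hat⟩⟩
  refine ⟨fun x y => ?_⟩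
  exact (key x.val (by simpa using x.prop)).trans (key y.val (by simpa using y.prop)).symm


lemma g_bounded {a b : ℕ} {A B : Finset ℕ} (hb : b < p) (hA : A ⊆ range s)
    (hB : B ⊆ range s) : ∀ m ∈ g p s a b A B, m < p + 2*s := by
  intro m hm
  simp only [g, Finset.mem_union, Finset.mem_Icc, Finset.mem_image] at hm
  rcases hm with (⟨h1, h2⟩ | ⟨c, hc, hcm⟩) | ⟨c, hc, hcm⟩
  · omega
  · have := mem_range.mp (hA hc); omega
  · have := mem_range.mp (hB hc); omega

lemma lift_inj {N N' : Finset ℕ} (hN : ∀ m ∈ N, m < p + 2*s)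
    (hN' : ∀ m ∈ N', m < p + 2*s) (h : lift p s N = lift p s N') : N = N' := by
  ext m
  constructor
  · intro hm
    have : (⟨m, hN m hm⟩ : Fin (p+2*s)) ∈ lift p s N := mem_lift.mpr hm
    rw [h] at this
    exact mem_lift.mp this
  · intro hm
    have : (⟨m, hN' m hm⟩ : Fin (p+2*s)) ∈ lift p s N' := mem_lift.mpr hm
    rw [← h] at this
    exact mem_lift.mp this

lemma card_lift {N : Finset ℕ} (hN : ∀ m ∈ N, m < p + 2*s) :
    (lift p s N).card = N.card := by
  have : lift p s N = N.attachFin hN := by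
    ext v
    rw [mem_lift, Finset.mem_attachFin]
  rw [this, Finset.card_attachFin]

lemma card_g {a b : ℕ} {A B : Finset ℕ} (hab : a ≤ b) (hb : b < p) (hA : A ⊆ range s)
    (hB : B ⊆ range s) : (g p s a b A B).card = (b - a + 1) + A.card + B.card := by
  have d1 : Disjoint (Finset.Icc a b) (A.image (· + p)) := by
    rw [Finset.disjoint_left]
    intro m hm hm'
    rw [Finset.mem_Icc] at hm
    obtain ⟨c, hc, hcm⟩ := Finset.mem_image.mp hm'
    omega
  have d2 : Disjoint (Finset.Icc a b ∪ A.image (· + p)) (B.image (· + (p + s))) := by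
    rw [Finset.disjoint_left]
    intro m hm hm'
    obtain ⟨c, hc, hcm⟩ := Finset.mem_image.mp hm'
    rcases Finset.mem_union.mp hm with h | h
    · rw [Finset.mem_Icc] at h; omega
    · obtain ⟨c', hc', hcm'⟩ := Finset.mem_image.mp h
      have := mem_range.mp (hB hc)
      have := mem_range.mp (hA hc')
      omega
  rw [g, Finset.card_union_of_disjoint d2, Finset.card_union_of_disjoint d1,
    Finset.card_image_of_injective _ (add_left_injective p),
    Finset.card_image_of_injective _ (add_left_injective (p+s)),
    Nat.card_Icc]
  omega

lemma singleton_connected (v : Fin (p + 2*s)) :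
    ((doubleBroom (p + 2*s) s).induce (({v} : Finset (Fin (p+2*s))) : Set (Fin (p+2*s)))).Connected := by
  haveI : Nonempty (({v} : Finset (Fin (p+2*s))) : Set (Fin (p+2*s))) := ⟨⟨v, by simp⟩⟩
  refine ⟨fun x y => ?_⟩
  have hx : (x : Fin (p+2*s)) = v := by have := x.prop; simpa using this
  have hy : (y : Fin (p+2*s)) = v := by have := y.prop; simpa using this
  have : x = y := Subtype.ext (hx.trans hy.symm)
  rw [this]

lemma backward (hp : 2 ≤ p) {i : (ℕ × ℕ) × Finset ℕ × Finset ℕ ⊕ ℕ}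
    (hi : i ∈ (S1 p s).disjSum (range (2*s))) :
    F p s i ∈ subtrees (doubleBroom (p + 2*s) s) := by
  simp only [subtrees, mem_filter, mem_univ, true_and]
  rcases i with q | ℓ
  · rw [Finset.inl_mem_disjSum, S1, mem_filter] at hi
    obtain ⟨hq1, hab, hA0, hB0⟩ := hi
    simp only [mem_product, mem_range, mem_powerset] at hq1
    obtain ⟨⟨hap, hbp⟩, hAs, hBs⟩ := hq1
    constructor
    · refine ⟨⟨q.1.1, by omega⟩, ?_⟩
      simp only [F, mem_lift, g, Finset.mem_union, Finset.mem_Icc]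
      exact Or.inl (Or.inl ⟨le_rfl, hab⟩)
    · exact good_connected hp hab hbp hAs hBs
        (fun h => hA0.resolve_right (Finset.nonempty_iff_ne_empty.mp h))
        (fun h => hB0.resolve_right (Finset.nonempty_iff_ne_empty.mp h))
  · rw [Finset.inr_mem_disjSum, mem_range] at hi
    have hsing : F p s (.inr ℓ) = {(⟨p + ℓ, by omega⟩ : Fin (p+2*s))} := by
      ext v
      simp only [F, mem_lift, Finset.mem_singleton]
      constructor
      · intro h; exact Fin.ext (by simpa using h)
      · intro h; simp [h]
    rw [hsing]
    exact ⟨Finset.singleton_nonempty _, singleton_connected _⟩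

lemma subtrees_eq (hp : 2 ≤ p) :
    subtrees (doubleBroom (p + 2*s) s) = ((S1 p s).disjSum (range (2*s))).image (F p s) := by
  apply Finset.Subset.antisymm
  · intro t ht
    exact forward hp ht
  · intro t ht
    obtain ⟨i, hi, rfl⟩ := Finset.mem_image.mp ht
    exact backward hp hi

lemma F_injOn (hp : 2 ≤ p) : Set.InjOn (F p s) ((S1 p s).disjSum (range (2*s)) : Finset _) := by
  intro i hi j hj hij
  rw [Finset.mem_coe] at hi hj
  have memS1 : ∀ q ∈ S1 p s, q.1.1 ≤ q.1.2 ∧ q.1.2 < p ∧ q.2.1 ⊆ range s ∧ q.2.2 ⊆ range s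
      ∧ (q.1.1 = 0 ∨ q.2.1 = ∅) ∧ (q.1.2 = p - 1 ∨ q.2.2 = ∅) := by
    intro q hq
    rw [S1, mem_filter] at hq
    obtain ⟨hq1, hab, hA0, hB0⟩ := hq
    simp only [mem_product, mem_range, mem_powerset] at hq1
    exact ⟨hab, hq1.1.2, hq1.2.1, hq1.2.2, hA0, hB0⟩
  rcases i with q | ℓ <;> rcases j with q' | ℓ'
  · -- inl inl
    have hq := memS1 q (Finset.inl_mem_disjSum.mp hi)
    have hq' := memS1 q' (Finset.inl_mem_disjSum.mp hj)
    obtain ⟨hab, hbp, hAs, hBs, -, -⟩ := hq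
    obtain ⟨hab', hbp', hAs', hBs', -, -⟩ := hq'
    simp only [F] at hij
    have hgeq : g p s q.1.1 q.1.2 q.2.1 q.2.2 = g p s q'.1.1 q'.1.2 q'.2.1 q'.2.2 :=
      lift_inj (g_bounded hbp hAs hBs) (g_bounded hbp' hAs' hBs') hij
    -- characterize membership below p
    have memlt : ∀ (a b : ℕ) (A B : Finset ℕ), b < p → ∀ m < p,
        (m ∈ g p s a b A B ↔ a ≤ m ∧ m ≤ b) := by
      intro a b A B hb m hm
      simp only [g, Finset.mem_union, Finset.mem_Icc, Finset.mem_image]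
      constructor
      · rintro ((h | ⟨c, hc, hcm⟩) | ⟨c, hc, hcm⟩) <;> omega
      · intro h; exact Or.inl (Or.inl h)
    have memA : ∀ (a b : ℕ) (A B : Finset ℕ), b < p → A ⊆ range s → B ⊆ range s →
        ∀ c < s, (c + p ∈ g p s a b A B ↔ c ∈ A) := by
      intro a b A B hb hA hB c hcs
      simp only [g, Finset.mem_union, Finset.mem_Icc, Finset.mem_image]
      constructor
      · rintro ((h | ⟨c', hc', hcm⟩) | ⟨c', hc', hcm⟩)
        · omega
        · have : c' = c := by omega
          rwa [← this]
        · have := mem_range.mp (hB hc'); omega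
      · intro h; exact Or.inl (Or.inr ⟨c, h, rfl⟩)
    have memB : ∀ (a b : ℕ) (A B : Finset ℕ), b < p → A ⊆ range s → B ⊆ range s →
        ∀ c < s, (c + (p + s) ∈ g p s a b A B ↔ c ∈ B) := by
      intro a b A B hb hA hB c hcs
      simp only [g, Finset.mem_union, Finset.mem_Icc, Finset.mem_image]
      constructor
      · rintro ((h | ⟨c', hc', hcm⟩) | ⟨c', hc', hcm⟩)
        · omega
        · have := mem_range.mp (hA hc'); omega
        · have : c' = c := by omega
          rwa [← this]
      · intro h; exact Or.inr ⟨c, h, rfl⟩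
    have ha : q.1.1 = q'.1.1 ∧ q.1.2 = q'.1.2 := by
      have h1 : q.1.1 ∈ g p s q'.1.1 q'.1.2 q'.2.1 q'.2.2 := by
        rw [← hgeq, memlt _ _ _ _ hbp _ (by omega)]; omega
      have h2 : q'.1.1 ∈ g p s q.1.1 q.1.2 q.2.1 q.2.2 := by
        rw [hgeq, memlt _ _ _ _ hbp' _ (by omega)]; omega
      have h3 : q.1.2 ∈ g p s q'.1.1 q'.1.2 q'.2.1 q'.2.2 := by
        rw [← hgeq, memlt _ _ _ _ hbp _ (by omega)]; omega
      have h4 : q'.1.2 ∈ g p s q.1.1 q.1.2 q.2.1 q.2.2 := by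
        rw [hgeq, memlt _ _ _ _ hbp' _ (by omega)]; omega
      rw [memlt _ _ _ _ hbp' _ (by omega)] at h1 h3
      rw [memlt _ _ _ _ hbp _ (by omega)] at h2 h4
      omega
    have hAeq : q.2.1 = q'.2.1 := by
      ext c
      rcases Nat.lt_or_ge c s with hcs | hcs
      · rw [← memA _ _ _ _ hbp hAs hBs c hcs, ← memA _ _ _ _ hbp' hAs' hBs' c hcs, hgeq]
      · constructor
        · intro h; have := mem_range.mp (hAs h); omega
        · intro h; have := mem_range.mp (hAs' h); omega
    have hBeq : q.2.2 = q'.2.2 := by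
      ext c
      rcases Nat.lt_or_ge c s with hcs | hcs
      · rw [← memB _ _ _ _ hbp hAs hBs c hcs, ← memB _ _ _ _ hbp' hAs' hBs' c hcs, hgeq]
      · constructor
        · intro h; have := mem_range.mp (hBs h); omega
        · intro h; have := mem_range.mp (hBs' h); omega
    have : q = q' := by
      rcases q with ⟨⟨a, b⟩, A, B⟩
      rcases q' with ⟨⟨a', b'⟩, A', B'⟩
      simp only [Prod.mk.injEq]
      exact ⟨⟨ha.1, ha.2⟩, hAeq, hBeq⟩
    rw [this]
  · -- inl inr: contradiction
    exfalso
    have hq := memS1 q (Finset.inl_mem_disjSum.mp hi)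
    have hℓ : ℓ' < 2*s := mem_range.mp (Finset.inr_mem_disjSum.mp hj)
    obtain ⟨hab, hbp, hAs, hBs, -, -⟩ := hq
    simp only [F] at hij
    have h1 : (⟨q.1.1, by omega⟩ : Fin (p+2*s)) ∈ lift p s (g p s q.1.1 q.1.2 q.2.1 q.2.2) := by
      rw [mem_lift]
      simp only [g, Finset.mem_union, Finset.mem_Icc]
      exact Or.inl (Or.inl ⟨le_rfl, hab⟩)
    rw [hij, mem_lift, Finset.mem_singleton] at h1
    simp only [Fin.val_mk] at h1
    omega
  · -- inr inl: contradiction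
    exfalso
    have hq := memS1 q' (Finset.inl_mem_disjSum.mp hj)
    have hℓ : ℓ < 2*s := mem_range.mp (Finset.inr_mem_disjSum.mp hi)
    obtain ⟨hab, hbp, hAs, hBs, -, -⟩ := hq
    simp only [F] at hij
    have h1 : (⟨q'.1.1, by omega⟩ : Fin (p+2*s)) ∈ lift p s (g p s q'.1.1 q'.1.2 q'.2.1 q'.2.2) := by
      rw [mem_lift]
      simp only [g, Finset.mem_union, Finset.mem_Icc]
      exact Or.inl (Or.inl ⟨le_rfl, hab⟩)
    rw [← hij, mem_lift, Finset.mem_singleton] at h1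
    simp only [Fin.val_mk] at h1
    omega
  · -- inr inr
    have hℓ : ℓ < 2*s := mem_range.mp (Finset.inr_mem_disjSum.mp hi)
    simp only [F] at hij
    have h1 : (⟨p + ℓ, by omega⟩ : Fin (p+2*s)) ∈ lift p s ({p + ℓ} : Finset ℕ) := by
      rw [mem_lift]; simp
    rw [hij, mem_lift, Finset.mem_singleton] at h1
    simp at h1
    rw [h1]


lemma two_sum_powerset_card (S : Finset ℕ) :
    2 * ∑ A ∈ S.powerset, A.card = S.card * 2 ^ S.card := by
  classical
  induction S using Finset.induction_on with
  | empty => simp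
  | @insert x S hx ih =>
    rw [Finset.powerset_insert, Finset.sum_union, Finset.sum_image]
    · have hc : ∀ A ∈ S.powerset, (insert x A).card = A.card + 1 := by
        intro A hA
        rw [Finset.mem_powerset] at hA
        rw [Finset.card_insert_of_notMem (fun h => hx (hA h))]
      have h1 : ∑ A ∈ S.powerset, (insert x A).card
          = (∑ A ∈ S.powerset, A.card) + 2 ^ S.card := by
        calc ∑ A ∈ S.powerset, (insert x A).card
            = ∑ A ∈ S.powerset, (A.card + 1) := Finset.sum_congr rfl hc
          _ = (∑ A ∈ S.powerset, A.card) + 2 ^ S.card := by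
              rw [Finset.sum_add_distrib, Finset.sum_const, smul_eq_mul, mul_one,
                Finset.card_powerset]
      rw [h1, Finset.card_insert_of_notMem hx]
      have h2 : (2:ℕ) ^ (S.card + 1) = 2 ^ S.card * 2 := by ring
      rw [h2]
      nlinarith [ih]
    · intro A hA B hB hAB
      rw [Finset.mem_coe, Finset.mem_powerset] at hA hB
      have he : ∀ C ⊆ S, (insert x C).erase x = C := by
        intro C hC
        rw [Finset.erase_insert (fun h => hx (hC h))]
      rw [← he A hA, ← he B hB, hAB]
    · rw [Finset.disjoint_right]
      intro A hA hA'
      rw [Finset.mem_image] at hA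
      obtain ⟨B, hB, rfl⟩ := hA
      rw [Finset.mem_powerset] at hA'
      exact hx (hA' (Finset.mem_insert_self x B))

lemma sum_range_add_one (j : ℕ) : ∑ i ∈ range j, (i + 1) = (j+1).choose 2 := by
  induction j with
  | zero => simp
  | succ j ih =>
    rw [Finset.sum_range_succ, ih]
    have h := Nat.choose_succ_succ (j+1) 1
    have h2 := Nat.choose_one_right (j+1)
    norm_num at h ⊢
    omega

lemma sum_choose_two (r : ℕ) : ∑ j ∈ range r, (j+1).choose 2 = (r+1).choose 3 := by
  induction r with
  | zero => simp [Nat.choose]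
  | succ r ih =>
    rw [Finset.sum_range_succ, ih]
    have h := Nat.choose_succ_succ (r+1) 2
    norm_num at h ⊢
    omega

lemma main_sum {p s : ℕ} (hp : 2 ≤ p) (hs : 1 ≤ s) :
    (∑ t ∈ subtrees (doubleBroom (p + 2*s) s), t.card) =
      2 ^ (2 * s) * (p + s) + 2 ^ s * (p + s) * (p - 1) + p.choose 3 + 2 * s := by
  obtain ⟨r, rfl⟩ : ∃ r, p = r + 1 := ⟨p - 1, by omega⟩
  have hr : 1 ≤ r := by omega
  rw [subtrees_eq hp,
    Finset.sum_image (fun x hx y hy h => F_injOn hp (by simpa using hx) (by simpa using hy) h),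
    Finset.sum_disjSum]
  -- the singleton part
  have hinr : ∀ ℓ ∈ range (2*s), (F (r+1) s (Sum.inr ℓ)).card = 1 := by
    intro ℓ hℓ
    rw [mem_range] at hℓ
    simp only [F]
    rw [card_lift (by intro m hm; simp at hm; omega)]
    simp
  rw [Finset.sum_congr rfl hinr, Finset.sum_const, Finset.card_range, smul_eq_mul, mul_one]
  -- card of F (inl q) for q in S1
  have hinl : ∀ q ∈ S1 (r+1) s, (F (r+1) s (Sum.inl q)).card
      = (q.1.2 - q.1.1 + 1) + q.2.1.card + q.2.2.card := by
    intro q hq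
    rw [S1, mem_filter] at hq
    obtain ⟨hq1, hab, -, -⟩ := hq
    simp only [mem_product, mem_range, mem_powerset] at hq1
    obtain ⟨⟨hap, hbp⟩, hAs, hBs⟩ := hq1
    simp only [F]
    rw [card_lift (g_bounded hbp hAs hBs), card_g hab hbp hAs hBs]
  rw [Finset.sum_congr rfl hinl]
  -- decompose S1 into four pieces
  set P11 := (((range s).powerset ×ˢ (range s).powerset).image
    (fun AB : Finset ℕ × Finset ℕ => (((0:ℕ), r), AB.1, AB.2))) with hP11
  set P10 := (((range r) ×ˢ (range s).powerset).image
    (fun x : ℕ × Finset ℕ => (((0:ℕ), x.1), x.2, (∅ : Finset ℕ)))) with hP10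
  set P01 := (((range r) ×ˢ (range s).powerset).image
    (fun x : ℕ × Finset ℕ => ((x.1+1, r), (∅ : Finset ℕ), x.2))) with hP01
  set P00 := (((range r).sigma (fun j => range j)).image
    (fun x : Σ _ : ℕ, ℕ => ((x.2+1, x.1), (∅:Finset ℕ), (∅:Finset ℕ)))) with hP00
  have hr1 : r + 1 - 1 = r := by omega
  have hSeq : S1 (r+1) s = (P11 ∪ P10) ∪ (P01 ∪ P00) := by
    ext q
    rcases q with ⟨⟨a, b⟩, A, B⟩
    simp only [S1, mem_filter, mem_product, mem_range, mem_powerset, hP11, hP10, hP01, hP00,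
      Finset.mem_union, Finset.mem_image, Finset.mem_sigma, mem_range, Prod.exists, hr1]
    constructor
    · rintro ⟨⟨⟨hap, hbp⟩, hAs, hBs⟩, hab, hA0, hB0⟩
      by_cases ha : a = 0
      · by_cases hb : b = r
        · left; left
          exact ⟨A, B, by simp [mem_product, mem_powerset, hAs, hBs], by rw [ha, hb]⟩
        · left; right
          have hBe : B = ∅ := hB0.resolve_left hb
          exact ⟨b, A, ⟨by omega, hAs⟩, by rw [ha, hBe]⟩
      · have hAe : A = ∅ := hA0.resolve_left ha
        by_cases hb : b = r
        · right; left
          refine ⟨a - 1, B, ⟨by omega, hBs⟩, ?_⟩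
          rw [hAe]
          have : a - 1 + 1 = a := by omega
          rw [this, hb]
        · right; right
          have hBe : B = ∅ := hB0.resolve_left hb
          refine ⟨⟨b, a - 1⟩, ⟨show b < r by omega, show a - 1 < b by omega⟩, ?_⟩
          rw [hAe, hBe]
          have : a - 1 + 1 = a := by omega
          simp only [this]
    · rintro ((⟨A', B', hm, he⟩ | ⟨b', A', hm, he⟩) | (⟨a', B', hm, he⟩ | ⟨⟨j, i⟩, hm, he⟩))
      · simp only [Prod.mk.injEq] at he
        obtain ⟨⟨rfl, rfl⟩, rfl, rfl⟩ := he
        exact ⟨⟨⟨by omega, by omega⟩, hm.1, hm.2⟩, by omega, Or.inl rfl, Or.inl rfl⟩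
      · simp only [Prod.mk.injEq] at he
        obtain ⟨⟨rfl, rfl⟩, rfl, rfl⟩ := he
        exact ⟨⟨⟨by omega, by omega⟩, hm.2, by simp⟩, by omega, Or.inl rfl, Or.inr rfl⟩
      · simp only [Prod.mk.injEq] at he
        obtain ⟨⟨rfl, rfl⟩, rfl, rfl⟩ := he
        exact ⟨⟨⟨by omega, by omega⟩, by simp, hm.2⟩, by omega, Or.inr rfl, Or.inl rfl⟩
      · dsimp only at hm he
        simp only [Prod.mk.injEq] at he
        obtain ⟨⟨rfl, rfl⟩, rfl, rfl⟩ := he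
        exact ⟨⟨⟨by omega, by omega⟩, by simp, by simp⟩, by omega, Or.inr rfl, Or.inr rfl⟩
  -- disjointness
  have hd1 : Disjoint P11 P10 := by
    rw [Finset.disjoint_left]
    rintro q hq hq'
    rw [hP11, Finset.mem_image] at hq
    rw [hP10, Finset.mem_image] at hq'
    obtain ⟨AB, hAB, rfl⟩ := hq
    obtain ⟨x, hx, he⟩ := hq'
    simp only [mem_product, mem_range] at hx
    simp only [Prod.mk.injEq] at he
    omega
  have hd2 : Disjoint P01 P00 := by
    rw [Finset.disjoint_left]
    rintro q hq hq'
    rw [hP01, Finset.mem_image] at hq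
    rw [hP00, Finset.mem_image] at hq'
    obtain ⟨x, hx, rfl⟩ := hq
    obtain ⟨y, hy, he⟩ := hq'
    simp only [Finset.mem_sigma, mem_range] at hy
    simp only [Prod.mk.injEq] at he
    omega
  have hd3 : Disjoint (P11 ∪ P10) (P01 ∪ P00) := by
    rw [Finset.disjoint_left]
    rintro q hq hq'
    have hq0 : q.1.1 = 0 := by
      rcases Finset.mem_union.mp hq with h | h
      · rw [hP11, Finset.mem_image] at h
        obtain ⟨AB, hAB, rfl⟩ := h
        rfl
      · rw [hP10, Finset.mem_image] at h
        obtain ⟨x, hx, rfl⟩ := h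
        rfl
    have hq1 : 1 ≤ q.1.1 := by
      rcases Finset.mem_union.mp hq' with h | h
      · rw [hP01, Finset.mem_image] at h
        obtain ⟨x, hx, rfl⟩ := h
        simp
      · rw [hP00, Finset.mem_image] at h
        obtain ⟨y, hy, rfl⟩ := h
        simp
    omega
  rw [hSeq, Finset.sum_union hd3, Finset.sum_union hd1, Finset.sum_union hd2]
  -- evaluate each piece
  set SP := ∑ A ∈ (range s).powerset, A.card with hSP
  have hSP2 : 2 * SP = s * 2 ^ s := by
    rw [hSP, two_sum_powerset_card]
    simp
  have E11 : ∑ q ∈ P11, ((q.1.2 - q.1.1 + 1) + q.2.1.card + q.2.2.card)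
      = 2^s * (2^s * (r+1)) + (2^s * SP + 2^s * SP) := by
    rw [hP11, Finset.sum_image]
    · rw [Finset.sum_product]
      have : ∀ A ∈ (range s).powerset, ∑ B ∈ (range s).powerset,
          (((((0:ℕ), r), A, B).1.2 - (((0:ℕ), r), A, B).1.1 + 1)
            + ((((0:ℕ), r), A, B)).2.1.card + ((((0:ℕ), r), A, B)).2.2.card)
          = 2^s * (r + 1) + 2^s * A.card + SP := by
        intro A hA
        simp only
        rw [Finset.sum_add_distrib, Finset.sum_const, Finset.card_powerset, Finset.card_range,
          ← hSP, smul_eq_mul]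
        have : r - 0 + 1 + A.card = (r + 1) + A.card := by omega
        rw [this]
        ring
      rw [Finset.sum_congr rfl this, Finset.sum_add_distrib, Finset.sum_add_distrib,
        Finset.sum_const, Finset.sum_const, Finset.card_powerset, Finset.card_range,
        ← Finset.mul_sum, ← hSP, smul_eq_mul, smul_eq_mul]
      ring
    · rintro ⟨A, B⟩ hAB ⟨A', B'⟩ hAB' he
      simp only [Prod.mk.injEq] at he ⊢
      exact ⟨he.2.1, he.2.2⟩
  have E10 : ∑ q ∈ P10, ((q.1.2 - q.1.1 + 1) + q.2.1.card + q.2.2.card)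
      = ∑ x ∈ range r, (2^s * (x+1) + SP) := by
    rw [hP10, Finset.sum_image]
    · rw [Finset.sum_product]
      apply Finset.sum_congr rfl
      intro b hb
      simp only [Finset.card_empty, add_zero, Nat.sub_zero]
      rw [Finset.sum_add_distrib, Finset.sum_const, Finset.card_powerset, Finset.card_range,
        ← hSP, smul_eq_mul]
    · rintro ⟨b, A⟩ h1 ⟨b', A'⟩ h2 he
      simp only [Prod.mk.injEq] at he ⊢
      exact ⟨he.1.2, he.2.1⟩
  have E01 : ∑ q ∈ P01, ((q.1.2 - q.1.1 + 1) + q.2.1.card + q.2.2.card)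
      = ∑ x ∈ range r, (2^s * (r - x) + SP) := by
    rw [hP01, Finset.sum_image]
    · rw [Finset.sum_product]
      apply Finset.sum_congr rfl
      intro a' ha'
      rw [mem_range] at ha'
      simp only [Finset.card_empty, add_zero]
      have : r - (a' + 1) + 1 + 0 = r - a' := by omega
      rw [this]
      rw [Finset.sum_add_distrib, Finset.sum_const, Finset.card_powerset, Finset.card_range,
        ← hSP, smul_eq_mul]
    · rintro ⟨a1, B1⟩ h1 ⟨a2, B2⟩ h2 he
      simp only [Prod.mk.injEq] at he ⊢
      exact ⟨by omega, he.2.2⟩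
  have E00 : ∑ q ∈ P00, ((q.1.2 - q.1.1 + 1) + q.2.1.card + q.2.2.card)
      = (r+1).choose 3 := by
    rw [hP00, Finset.sum_image]
    · rw [Finset.sum_sigma]
      have : ∀ j ∈ range r, ∑ i ∈ range j,
          ((((⟨j, i⟩ : Σ _ : ℕ, ℕ).2+1, (⟨j, i⟩ : Σ _ : ℕ, ℕ).1), (∅:Finset ℕ), (∅:Finset ℕ)).1.2
            - (((⟨j, i⟩ : Σ _ : ℕ, ℕ).2+1, (⟨j, i⟩ : Σ _ : ℕ, ℕ).1), (∅:Finset ℕ), (∅:Finset ℕ)).1.1 + 1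
            + ((((⟨j, i⟩ : Σ _ : ℕ, ℕ).2+1, (⟨j, i⟩ : Σ _ : ℕ, ℕ).1), (∅:Finset ℕ), (∅:Finset ℕ))).2.1.card
            + ((((⟨j, i⟩ : Σ _ : ℕ, ℕ).2+1, (⟨j, i⟩ : Σ _ : ℕ, ℕ).1), (∅:Finset ℕ), (∅:Finset ℕ))).2.2.card)
          = (j+1).choose 2 := by
        intro j hj
        simp only [Finset.card_empty, add_zero]
        rw [← sum_range_add_one j]
        rw [← Finset.sum_range_reflect (fun i => i + 1) j]
        apply Finset.sum_congr rfl
        intro i hi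
        rw [mem_range] at hi
        omega
      rw [Finset.sum_congr rfl this, sum_choose_two]
    · rintro ⟨j, i⟩ h1 ⟨j', i'⟩ h2 he
      dsimp only at he
      simp only [Prod.mk.injEq] at he
      obtain ⟨⟨h3, h4⟩, -⟩ := he
      have h5 : i = i' := by omega
      subst h4
      subst h5
      rfl
  rw [E11, E10, E01, E00]
  -- combine the two middle sums
  have Emid : (∑ x ∈ range r, (2^s * (x+1) + SP)) + (∑ x ∈ range r, (2^s * (r - x) + SP))
      = r * (2^s * (r+1) + 2 * SP) := by
    rw [← Finset.sum_add_distrib]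
    have hterm : ∀ x ∈ range r, (2^s * (x+1) + SP + (2^s * (r - x) + SP))
        = 2^s * (r+1) + 2*SP := by
      intro x hx
      rw [mem_range] at hx
      have h2 : 2^s * (x+1) + SP + (2^s * (r - x) + SP) = 2^s * ((x+1) + (r-x)) + 2*SP := by
        ring
      have h1 : (x + 1) + (r - x) = r + 1 := by omega
      rw [h2, h1]
    rw [Finset.sum_congr rfl hterm, Finset.sum_const, Finset.card_range, smul_eq_mul]
  -- final arithmetic
  obtain ⟨s', rfl⟩ : ∃ s', s = s' + 1 := ⟨s - 1, by omega⟩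
  have h2s : (2:ℕ) ^ (2 * (s'+1)) = 2 ^ (s'+1) * 2 ^ (s'+1) := by
    rw [← pow_add]; ring_nf
  rw [h2s, hr1]
  zify at Emid hSP2 ⊢
  linear_combination Emid + ((2:ℤ)^(s'+1) + (r:ℤ)) * hSP2

end DBproof

/-- For the double-broom consisting of a path with `n − 2s` vertices and `s` pendant
leaves at each endpoint (`s ≥ 1`, `n − 2s ≥ 2`), the sum of the orders of all subtrees
equals `2^{2s}(n − s) + 2^s(n − s)(n − 2s − 1) + C(n−2s, 3) + 2s`. -/
theorem stmt12 (n s : ℕ) (hs : 1 ≤ s) (hn : 2 * s + 2 ≤ n) :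
    (∑ t ∈ subtrees (doubleBroom n s), t.card) =
      2 ^ (2 * s) * (n - s) + 2 ^ s * (n - s) * (n - 2 * s - 1) +
        (n - 2 * s).choose 3 + 2 * s := by
  obtain ⟨p, rfl⟩ : ∃ p, n = p + 2 * s := ⟨n - 2 * s, by omega⟩
  have h1 : p + 2 * s - 2 * s = p := by omega
  have h2 : p + 2 * s - s = p + s := by omega
  rw [h1, h2]
  exact DBproof.main_sum (by omega) hs
end

section
/- Let T be a tree on n vertices and r a vertex contained in more than half of all subtrees of T. Then μ_T ≤ μ_T(r) = n − Δ(T) ≤ n − (1/2)·log₂ σ(T) + 1/2, where σ(T) is the total number of subtrees of T. -/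
open scoped Classical

/-- The subtrees of a graph containing a fixed vertex `r`. -/
noncomputable def subtreesThrough {V : Type*} [Fintype V] (G : SimpleGraph V) (r : V) :
    Finset (Finset V) :=
  Finset.univ.filter (fun s => r ∈ s ∧ (G.induce (s : Set V)).Connected)


set_option linter.unusedSectionVars false

namespace Stmt15Aux
open Finset SimpleGraph

variable {V : Type*} [Fintype V] {G : SimpleGraph V}

def Reach (G : SimpleGraph V) (s : Finset V) : V → V → Prop :=
  Relation.ReflTransGen (fun a b => G.Adj a b ∧ a ∈ s ∧ b ∈ s)

noncomputable def RR (G : SimpleGraph V) (u : V) (s : Finset V) : Finset V :=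
  s.filter (Reach G s u)

noncomputable def AA (G : SimpleGraph V) (u : V) (s : Finset V) : Finset (Finset V) :=
  Finset.univ.filter (fun S => u ∈ S ∧ S ⊆ s ∧ (G.induce (S : Set V)).Connected)

noncomputable def TT (G : SimpleGraph V) (u : V) (s : Finset V) : Finset (Finset V) :=
  Finset.univ.filter (fun S => S.Nonempty ∧ S ⊆ RR G u s ∧ (G.induce (S : Set V)).Connected)

lemma reach_mono {s t : Finset V} (hst : s ⊆ t) {u x : V} (h : Reach G s u x) :
    Reach G t u x := by
  induction h with
  | refl => exact Relation.ReflTransGen.refl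
  | tail _ hs ih => exact ih.tail ⟨hs.1, hst hs.2.1, hst hs.2.2⟩

lemma reach_mem_right {s : Finset V} {u x : V} (hu : u ∈ s) (h : Reach G s u x) : x ∈ s := by
  rcases (Relation.ReflTransGen.cases_tail h) with h | ⟨c, _, hs⟩
  · exact h ▸ hu
  · exact hs.2.2

lemma reach_trans {s : Finset V} {u x y : V} (h : Reach G s u x) (h' : Reach G s x y) :
    Reach G s u y := h.trans h'

lemma mem_RR {s : Finset V} {u x : V} : x ∈ RR G u s ↔ x ∈ s ∧ Reach G s u x := by
  simp [RR]

lemma RR_subset {u : V} {s : Finset V} : RR G u s ⊆ s := Finset.filter_subset _ _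

lemma self_mem_RR {u : V} {s : Finset V} (hu : u ∈ s) : u ∈ RR G u s :=
  mem_RR.2 ⟨hu, Relation.ReflTransGen.refl⟩

lemma walk_induce_to_reach {S : Finset V} :
    ∀ {a b : (S : Set V)}, ((G.induce (S : Set V)).Walk a b) → Reach G S a.1 b.1 := by
  intro a b w
  induction w with
  | nil => exact Relation.ReflTransGen.refl
  | @cons a c b h p ih =>
      exact Relation.ReflTransGen.head ⟨h, Finset.mem_coe.1 a.2, Finset.mem_coe.1 c.2⟩ ih

lemma reach_to_reachable {S : Finset V} {u x : V} (hu : u ∈ S) (h : Reach G S u x) :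
    ∃ hx : x ∈ S, (G.induce (S : Set V)).Reachable ⟨u, hu⟩ ⟨x, hx⟩ := by
  induction h with
  | refl => exact ⟨hu, Reachable.refl _⟩
  | @tail y x hy hstep ih =>
      rcases ih with ⟨hyS, hreach⟩
      refine ⟨hstep.2.2, hreach.trans (Adj.reachable ?_)⟩
      exact hstep.1

lemma conn_iff {S : Finset V} {u : V} (hu : u ∈ S) :
    (G.induce (S : Set V)).Connected ↔ ∀ x ∈ S, Reach G S u x := by
  constructor
  · intro h x hx
    obtain ⟨w⟩ := h.preconnected ⟨u, hu⟩ ⟨x, hx⟩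
    exact walk_induce_to_reach w
  · intro h
    have hne : Nonempty ((S : Set V)) := ⟨⟨u, hu⟩⟩
    refine Connected.mk ?_
    intro a b
    obtain ⟨_, ha⟩ := reach_to_reachable hu (h a (Finset.mem_coe.1 a.2))
    obtain ⟨_, hb⟩ := reach_to_reachable hu (h b (Finset.mem_coe.1 b.2))
    exact ((by exact ha : (G.induce (S : Set V)).Reachable ⟨u, hu⟩ a).symm).trans hb

lemma mem_AA {u : V} {s S : Finset V} :
    S ∈ AA G u s ↔ u ∈ S ∧ S ⊆ s ∧ (G.induce (S : Set V)).Connected := by simp [AA]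

lemma mem_TT {u : V} {s S : Finset V} :
    S ∈ TT G u s ↔ S.Nonempty ∧ S ⊆ RR G u s ∧ (G.induce (S : Set V)).Connected := by
  simp [TT]

lemma singleton_mem_AA {u : V} {s : Finset V} (hu : u ∈ s) : {u} ∈ AA G u s := by
  refine mem_AA.2 ⟨Finset.mem_singleton_self u, Finset.singleton_subset_iff.2 hu, ?_⟩
  rw [conn_iff (Finset.mem_singleton_self u)]
  intro x hx
  rw [Finset.mem_singleton] at hx
  subst hx
  exact Relation.ReflTransGen.refl

lemma AA_subset_RR {u : V} {s S : Finset V} (hS : S ∈ AA G u s) : S ⊆ RR G u s := by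
  rw [mem_AA] at hS
  obtain ⟨hu, hsub, hconn⟩ := hS
  intro x hx
  exact mem_RR.2 ⟨hsub hx, reach_mono hsub (((conn_iff hu).1 hconn) x hx)⟩

lemma AA_subset_TT {u : V} {s : Finset V} : AA G u s ⊆ TT G u s := by
  intro S hS
  exact mem_TT.2 ⟨⟨u, (mem_AA.1 hS).1⟩, AA_subset_RR hS, (mem_AA.1 hS).2.2⟩


section Btest
variable {V : Type*} [Fintype V] {G : SimpleGraph V}

lemma reach_to_walk {t : Finset V} {a b : V} (ha : a ∈ t) (h : Reach G t a b) :
    ∃ w : G.Walk a b, ∀ z ∈ w.support, z ∈ t := by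
  induction h using Relation.ReflTransGen.head_induction_on with
  | refl => exact ⟨Walk.nil, by simpa using ha⟩
  | @head a c hstep hrest ih =>
      obtain ⟨w, hw⟩ := ih hstep.2.2
      refine ⟨Walk.cons hstep.1 w, ?_⟩
      intro z hz
      rw [Walk.support_cons, List.mem_cons] at hz
      rcases hz with rfl | hz
      · exact hstep.2.1
      · exact hw z hz

lemma unique_entry (hT : G.IsAcyclic) {u c x : V} {s : Finset V} (huc : G.Adj u c)
    (hcs : c ∈ s) (hx : x ∈ RR G c (s.erase u)) (hadj : G.Adj u x) : x = c := by
  rw [mem_RR] at hx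
  have hce : c ∈ s.erase u := Finset.mem_erase.2 ⟨huc.ne', hcs⟩
  obtain ⟨w, hw⟩ := reach_to_walk hce hx.2
  have hp : ∀ z ∈ w.toPath.1.support, z ∈ s.erase u := fun z hz =>
    hw z (Walk.support_toPath_subset w hz)
  have hP2 : (Walk.cons huc w.toPath.1).IsPath := by
    rw [Walk.cons_isPath_iff]
    exact ⟨w.toPath.2, fun hu => (Finset.mem_erase.1 (hp u hu)).1 rfl⟩
  have := isAcyclic_iff_path_unique.1 hT (Path.singleton hadj) ⟨Walk.cons huc w.toPath.1, hP2⟩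
  have hsupp := congrArg (fun p : G.Path u x => p.1.support) this
  simp only [Path.singleton, Walk.support_cons, Walk.support_nil] at hsupp
  rw [Walk.support_eq_cons w.toPath.1] at hsupp
  have h2 := (List.cons_eq_cons.1 hsupp).2
  exact (List.cons_eq_cons.1 h2).1

end Btest

section Btest
variable {V : Type*} [Fintype V] {G : SimpleGraph V}

/-- Any edge from inside the branch `RR G c (s.erase u)` to a vertex of `s` other than `u`
stays in the branch. -/
lemma key_edge {u c b w : V} {s : Finset V} (hb : b ∈ RR G c (s.erase u))
    (hadj : G.Adj b w) (hws : w ∈ s) (hwu : w ≠ u) : w ∈ RR G c (s.erase u) := by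
  rw [mem_RR] at hb ⊢
  have hwe : w ∈ s.erase u := Finset.mem_erase.2 ⟨hwu, hws⟩
  exact ⟨hwe, hb.2.tail ⟨hadj, hb.1, hwe⟩⟩

/-- The fundamental splitting lemma along the branch at `c` (seen from `u`). -/
lemma split (hT : G.IsAcyclic) {u c : V} {s S : Finset V} (hSs : S ⊆ s)
    (huc : G.Adj u c) (hcs : c ∈ s) {x : V} (h : Reach G S u x) :
    (x ∈ RR G c (s.erase u) → c ∈ S ∧ Reach G (S ∩ RR G c (s.erase u)) c x) ∧
    (x ∉ RR G c (s.erase u) → Reach G (S \ RR G c (s.erase u)) u x) := by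
  set Br := RR G c (s.erase u) with hBr
  induction h with
  | refl =>
      constructor
      · intro hu
        exact absurd (Finset.mem_erase.1 (RR_subset hu)).1 (by simp)
      · intro _; exact Relation.ReflTransGen.refl
  | @tail y x hy hstep ih =>
      have hyS : y ∈ S := hstep.2.1
      have hxS : x ∈ S := hstep.2.2
      constructor
      · intro hx
        by_cases hyB : y ∈ Br
        · exact ⟨(ih.1 hyB).1,
            (ih.1 hyB).2.tail ⟨hstep.1, Finset.mem_inter.2 ⟨hyS, hyB⟩,
              Finset.mem_inter.2 ⟨hxS, hx⟩⟩⟩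
        · have hyu : y = u := by
            by_contra hne
            exact hyB (key_edge hx hstep.1.symm (hSs hyS) hne)
          subst hyu
          have hxc : x = c := unique_entry hT huc hcs hx hstep.1
          subst hxc
          exact ⟨hxS, Relation.ReflTransGen.refl⟩
      · intro hx
        by_cases hyB : y ∈ Br
        · have hxu : x = u := by
            by_contra hne
            exact hx (key_edge hyB hstep.1 (hSs hxS) hne)
          subst hxu
          exact Relation.ReflTransGen.refl
        · exact (ih.2 hyB).tail ⟨hstep.1, Finset.mem_sdiff.2 ⟨hyS, hyB⟩,
            Finset.mem_sdiff.2 ⟨hxS, hx⟩⟩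

end Btest

section Btest
variable {V : Type*} [Fintype V] {G : SimpleGraph V} {u c : V} {s : Finset V}

lemma reach_refine {t : Finset V} {x : V} (h : Reach G t c x) : Reach G (RR G c t) c x := by
  induction h with
  | refl => exact Relation.ReflTransGen.refl
  | @tail y x hy hstep ih =>
      exact ih.tail ⟨hstep.1, mem_RR.2 ⟨hstep.2.1, hy⟩, mem_RR.2 ⟨hstep.2.2, hy.tail hstep⟩⟩

lemma RR_idem (hcs : c ∈ s) (hcu : c ≠ u) :
    RR G c (RR G c (s.erase u)) = RR G c (s.erase u) := by
  apply Finset.Subset.antisymm RR_subset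
  intro x hx
  exact mem_RR.2 ⟨hx, reach_refine (mem_RR.1 hx).2⟩

lemma c_mem_Br (hcs : c ∈ s) (hcu : c ≠ u) : c ∈ RR G c (s.erase u) :=
  self_mem_RR (Finset.mem_erase.2 ⟨hcu, hcs⟩)

lemma Br_subset_s : RR G c (s.erase u) ⊆ s :=
  RR_subset.trans (Finset.erase_subset _ _)

lemma u_not_mem_Br : u ∉ RR G c (s.erase u) := fun h =>
  (Finset.mem_erase.1 (RR_subset h)).1 rfl

lemma RR_decomp (hT : G.IsAcyclic) (hus : u ∈ s) (huc : G.Adj u c) (hcs : c ∈ s) :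
    RR G u s = RR G u (s \ RR G c (s.erase u)) ∪ RR G c (s.erase u) := by
  set Br := RR G c (s.erase u) with hBr
  apply Finset.Subset.antisymm
  · intro x hx
    rw [mem_RR] at hx
    by_cases hxB : x ∈ Br
    · exact Finset.mem_union_right _ hxB
    · refine Finset.mem_union_left _ (mem_RR.2 ⟨Finset.mem_sdiff.2 ⟨hx.1, hxB⟩, ?_⟩)
      exact (split hT (Finset.Subset.refl s) huc hcs hx.2).2 hxB
  · intro x hx
    rcases Finset.mem_union.1 hx with hx | hx
    · rw [mem_RR] at hx ⊢
      exact ⟨(Finset.mem_sdiff.1 hx.1).1, reach_mono (Finset.sdiff_subset) hx.2⟩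
    · rw [mem_RR] at hx ⊢
      refine ⟨Finset.mem_of_mem_erase hx.1, ?_⟩
      exact Relation.ReflTransGen.head ⟨huc, hus, hcs⟩
        (reach_mono (Finset.erase_subset _ _) hx.2)

lemma disjoint_RR_Br : Disjoint (RR G u (s \ RR G c (s.erase u))) (RR G c (s.erase u)) :=
  Finset.disjoint_left.2 fun _ h h' => (Finset.mem_sdiff.1 (RR_subset h)).2 h'

lemma crossing (hT : G.IsAcyclic) (huc : G.Adj u c) (hcs : c ∈ s) {S : Finset V}
    (hSs : S ⊆ s) (hconn : (G.induce (S : Set V)).Connected)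
    {a x : V} (ha : a ∈ S) (haB : a ∉ RR G c (s.erase u)) (hx : x ∈ S)
    (hxB : x ∈ RR G c (s.erase u)) : u ∈ S ∧ c ∈ S := by
  set Br := RR G c (s.erase u) with hBr
  have hreach : Reach G S a x := (conn_iff ha).1 hconn x hx
  clear hx
  induction hreach with
  | refl => exact absurd hxB haB
  | @tail y x hy hstep ih =>
      by_cases hyB : y ∈ Br
      · rcases Relation.ReflTransGen.cases_head hy with h | ⟨z, hz, _⟩
        · exact absurd (h ▸ hyB) haB
        · exact ih hyB
      · have hyu : y = u := by
          by_contra hne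
          exact hyB (key_edge hxB hstep.1.symm (hSs hstep.2.1) hne)
        have hxc : x = c := unique_entry hT huc hcs hxB (hyu ▸ hstep.1)
        exact ⟨hyu ▸ hstep.2.1, hxc ▸ hstep.2.2⟩

end Btest

section Btest
variable {V : Type*} [Fintype V] {G : SimpleGraph V} {u c : V} {s : Finset V}

/-- The "joint" subtrees crossing the edge `u - c`. -/
noncomputable def JJ (G : SimpleGraph V) (u c : V) (s : Finset V) : Finset (Finset V) :=
  ((AA G u (s \ RR G c (s.erase u))) ×ˢ (AA G c (RR G c (s.erase u)))).image
    (fun p => p.1 ∪ p.2)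

lemma union_mem_AA (hus : u ∈ s) (huc : G.Adj u c) (hcs : c ∈ s)
    {S₁ S₂ : Finset V} (h₁ : S₁ ∈ AA G u (s \ RR G c (s.erase u)))
    (h₂ : S₂ ∈ AA G c (RR G c (s.erase u))) : S₁ ∪ S₂ ∈ AA G u s := by
  set Br := RR G c (s.erase u) with hBr
  rw [mem_AA] at h₁ h₂ ⊢
  obtain ⟨hu1, hs1, hc1⟩ := h₁
  obtain ⟨hc2, hs2, hc2'⟩ := h₂
  have huU : u ∈ S₁ ∪ S₂ := Finset.mem_union_left _ hu1
  have hcU : c ∈ S₁ ∪ S₂ := Finset.mem_union_right _ hc2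
  refine ⟨huU, Finset.union_subset (hs1.trans Finset.sdiff_subset) (hs2.trans Br_subset_s), ?_⟩
  rw [conn_iff huU]
  intro x hx
  rcases Finset.mem_union.1 hx with hx | hx
  · exact reach_mono Finset.subset_union_left ((conn_iff hu1).1 hc1 x hx)
  · exact Relation.ReflTransGen.head ⟨huc, huU, hcU⟩
      (reach_mono Finset.subset_union_right ((conn_iff hc2).1 hc2' x hx))

lemma pair_unique {S₁ S₂ T₁ T₂ : Finset V}
    (h₁ : S₁ ⊆ s \ RR G c (s.erase u)) (h₂ : S₂ ⊆ RR G c (s.erase u))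
    (h₁' : T₁ ⊆ s \ RR G c (s.erase u)) (h₂' : T₂ ⊆ RR G c (s.erase u))
    (h : S₁ ∪ S₂ = T₁ ∪ T₂) : S₁ = T₁ ∧ S₂ = T₂ := by
  set Br := RR G c (s.erase u) with hBr
  have d1 : Disjoint S₁ Br := Finset.disjoint_left.2 fun z hz hz' =>
    (Finset.mem_sdiff.1 (h₁ hz)).2 hz'
  have d1' : Disjoint T₁ Br := Finset.disjoint_left.2 fun z hz hz' =>
    (Finset.mem_sdiff.1 (h₁' hz)).2 hz'
  constructor
  · have := congrArg (· \ Br) h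
    simpa [Finset.union_sdiff_distrib, Finset.sdiff_eq_self_of_disjoint d1,
      Finset.sdiff_eq_self_of_disjoint d1',
      Finset.sdiff_eq_empty_iff_subset.2 h₂, Finset.sdiff_eq_empty_iff_subset.2 h₂'] using this
  · have := congrArg (· ∩ Br) h
    simpa [Finset.union_inter_distrib_right, (Finset.inter_eq_left.2 h₂),
      (Finset.inter_eq_left.2 h₂'),
      Finset.disjoint_iff_inter_eq_empty.1 d1, Finset.disjoint_iff_inter_eq_empty.1 d1'] using this

lemma AA_decomp (hT : G.IsAcyclic) (hus : u ∈ s) (huc : G.Adj u c) (hcs : c ∈ s) :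
    AA G u s = AA G u (s \ RR G c (s.erase u)) ∪ JJ G u c s := by
  set Br := RR G c (s.erase u) with hBr
  apply Finset.Subset.antisymm
  · intro S hS
    rw [mem_AA] at hS
    obtain ⟨huS, hSs, hconn⟩ := hS
    have hreach := (conn_iff huS).1 hconn
    by_cases hB : (S ∩ Br).Nonempty
    · apply Finset.mem_union_right
      obtain ⟨x₀, hx₀⟩ := hB
      have hx₀B := (Finset.mem_inter.1 hx₀).2
      have hcS : c ∈ S :=
        ((split hT hSs huc hcs (hreach x₀ (Finset.mem_inter.1 hx₀).1)).1 hx₀B).1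
      have hcBr : c ∈ Br := c_mem_Br hcs huc.ne'
      refine Finset.mem_image.2 ⟨⟨S \ Br, S ∩ Br⟩, Finset.mem_product.2 ⟨?_, ?_⟩, by
        simp [Finset.sdiff_union_inter]⟩
      · rw [mem_AA]
        have huSB : u ∈ S \ Br := Finset.mem_sdiff.2 ⟨huS, u_not_mem_Br⟩
        refine ⟨huSB, fun z hz => Finset.mem_sdiff.2
          ⟨hSs (Finset.mem_sdiff.1 hz).1, (Finset.mem_sdiff.1 hz).2⟩, ?_⟩
        rw [conn_iff huSB]
        intro x hx
        exact (split hT hSs huc hcs (hreach x (Finset.mem_sdiff.1 hx).1)).2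
          (Finset.mem_sdiff.1 hx).2
      · rw [mem_AA]
        have hcSB : c ∈ S ∩ Br := Finset.mem_inter.2 ⟨hcS, hcBr⟩
        refine ⟨hcSB, Finset.inter_subset_right, ?_⟩
        rw [conn_iff hcSB]
        intro x hx
        exact ((split hT hSs huc hcs (hreach x (Finset.mem_inter.1 hx).1)).1
          (Finset.mem_inter.1 hx).2).2
    · apply Finset.mem_union_left
      rw [mem_AA]
      refine ⟨huS, fun z hz => Finset.mem_sdiff.2 ⟨hSs hz, fun hzB => ?_⟩, hconn⟩
      exact hB ⟨z, Finset.mem_inter.2 ⟨hz, hzB⟩⟩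
  · apply Finset.union_subset
    · intro S hS
      rw [mem_AA] at hS ⊢
      exact ⟨hS.1, hS.2.1.trans Finset.sdiff_subset, hS.2.2⟩
    · intro S hS
      obtain ⟨⟨S₁, S₂⟩, hp, rfl⟩ := Finset.mem_image.1 hS
      rw [Finset.mem_product] at hp
      exact union_mem_AA hus huc hcs hp.1 hp.2

lemma AA_disj_JJ : Disjoint (AA G u (s \ RR G c (s.erase u))) (JJ G u c s) := by
  set Br := RR G c (s.erase u) with hBr
  rw [Finset.disjoint_left]
  intro S hS hSJ
  obtain ⟨⟨S₁, S₂⟩, hp, rfl⟩ := Finset.mem_image.1 hSJ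
  rw [Finset.mem_product] at hp
  have hc2 : c ∈ S₁ ∪ S₂ := Finset.mem_union_right _ (mem_AA.1 hp.2).1
  have := (mem_AA.1 hS).2.1 hc2
  exact (Finset.mem_sdiff.1 this).2 ((mem_AA.1 hp.2).2.1 (mem_AA.1 hp.2).1)

end Btest

section Btest
variable {V : Type*} [Fintype V] {G : SimpleGraph V} {u c : V} {s : Finset V}

lemma JJ_injOn :
    Set.InjOn (fun p : Finset V × Finset V => p.1 ∪ p.2)
      ((((AA G u (s \ RR G c (s.erase u))) ×ˢ (AA G c (RR G c (s.erase u)))) :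
        Finset (Finset V × Finset V)) : Set (Finset V × Finset V)) := by
  intro p hp q hq h
  rw [Finset.mem_coe, Finset.mem_product] at hp hq
  have h1 := (mem_AA.1 hp.1).2.1
  have h2 := (mem_AA.1 hp.2).2.1
  have h1' := (mem_AA.1 hq.1).2.1
  have h2' := (mem_AA.1 hq.2).2.1
  obtain ⟨e1, e2⟩ := pair_unique h1 h2 h1' h2' h
  exact Prod.ext e1 e2

lemma card_JJ :
    (JJ G u c s).card =
      (AA G u (s \ RR G c (s.erase u))).card * (AA G c (RR G c (s.erase u))).card := by
  rw [JJ, Finset.card_image_of_injOn JJ_injOn, Finset.card_product]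

lemma sum_JJ :
    ∑ S ∈ JJ G u c s, (S.card : ℝ) =
      (AA G c (RR G c (s.erase u))).card * (∑ S ∈ AA G u (s \ RR G c (s.erase u)), (S.card : ℝ))
      + (AA G u (s \ RR G c (s.erase u))).card *
          (∑ S ∈ AA G c (RR G c (s.erase u)), (S.card : ℝ)) := by
  rw [JJ, Finset.sum_image (fun p hp q hq h => JJ_injOn hp hq h)]
  rw [Finset.sum_product]
  have : ∀ S₁ ∈ AA G u (s \ RR G c (s.erase u)), ∀ S₂ ∈ AA G c (RR G c (s.erase u)),
      ((S₁ ∪ S₂).card : ℝ) = S₁.card + S₂.card := by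
    intro S₁ h₁ S₂ h₂
    have d : Disjoint S₁ S₂ := Finset.disjoint_left.2 fun z hz hz' =>
      (Finset.mem_sdiff.1 ((mem_AA.1 h₁).2.1 hz)).2 ((mem_AA.1 h₂).2.1 hz')
    rw [Finset.card_union_of_disjoint d]
    push_cast; ring
  rw [Finset.sum_congr rfl (fun S₁ h₁ => Finset.sum_congr rfl (fun S₂ h₂ => this S₁ h₁ S₂ h₂))]
  rw [Finset.sum_congr rfl (fun (S₁ : Finset V) _ => by
    rw [Finset.sum_add_distrib, Finset.sum_const, nsmul_eq_mul] :
    ∀ S₁ ∈ AA G u (s \ RR G c (s.erase u)), _ = _)]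
  rw [Finset.sum_add_distrib, ← Finset.mul_sum, Finset.sum_const, nsmul_eq_mul]

lemma AA_card_pos (hus : u ∈ s) : 0 < (AA G u s).card :=
  Finset.card_pos.2 ⟨{u}, singleton_mem_AA hus⟩

lemma one_le_sumA (hus : u ∈ s) : ((AA G u s).card : ℝ) ≤ ∑ S ∈ AA G u s, (S.card : ℝ) := by
  calc ((AA G u s).card : ℝ) = ∑ S ∈ AA G u s, (1 : ℝ) := by simp
  _ ≤ ∑ S ∈ AA G u s, (S.card : ℝ) := by
      refine Finset.sum_le_sum fun S hS => ?_
      have h1 : 0 < S.card := Finset.card_pos.2 ⟨u, (mem_AA.1 hS).1⟩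
      exact_mod_cast h1

lemma sumT_le_card_mul (hus : u ∈ s) :
    ∑ S ∈ TT G u s, (S.card : ℝ) ≤ ((RR G u s).card : ℝ) * (TT G u s).card := by
  calc ∑ S ∈ TT G u s, (S.card : ℝ) ≤ ∑ S ∈ TT G u s, ((RR G u s).card : ℝ) := by
        refine Finset.sum_le_sum fun S hS => ?_
        exact_mod_cast Finset.card_le_card (mem_TT.1 hS).2.1
  _ = ((RR G u s).card : ℝ) * (TT G u s).card := by
        rw [Finset.sum_const, nsmul_eq_mul, mul_comm]

lemma base_AA (hus : u ∈ s) (h : RR G u s = {u}) : AA G u s = {{u}} := by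
  apply Finset.Subset.antisymm
  · intro S hS
    rw [Finset.mem_singleton]
    have h1 : S ⊆ {u} := h ▸ AA_subset_RR hS
    exact Finset.Subset.antisymm h1 (Finset.singleton_subset_iff.2 (mem_AA.1 hS).1)
  · simpa using singleton_mem_AA (G := G) hus

lemma base_TT (hus : u ∈ s) (h : RR G u s = {u}) : TT G u s = {{u}} := by
  apply Finset.Subset.antisymm
  · intro S hS
    rw [Finset.mem_singleton]
    have h1 : S ⊆ {u} := h ▸ (mem_TT.1 hS).2.1
    rcases Finset.subset_singleton_iff.1 h1 with rfl | rfl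
    · exact absurd (mem_TT.1 hS).1 (by simp)
    · rfl
  · simpa using AA_subset_TT (singleton_mem_AA (G := G) hus)

lemma exists_c (hus : u ∈ s) (h : RR G u s ≠ {u}) : ∃ c, G.Adj u c ∧ c ∈ s := by
  have hne : ∃ x ∈ RR G u s, x ≠ u := by
    by_contra hc
    push_neg at hc
    exact h (Finset.Subset.antisymm (fun x hx => Finset.mem_singleton.2 (hc x hx))
      (Finset.singleton_subset_iff.2 (self_mem_RR hus)))
  obtain ⟨x, hx, hxu⟩ := hne
  rcases Relation.ReflTransGen.cases_head (mem_RR.1 hx).2 with heq | ⟨z, hz, _⟩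
  · exact absurd heq.symm hxu
  · exact ⟨z, hz.1, hz.2.2⟩

end Btest

section Analysis

lemma key_ineq (n : ℕ) (hn : 1 ≤ n) :
    ((n : ℝ) - 1) * Real.logb 2 ((n : ℝ) + 1) ≤ (n : ℝ) * Real.logb 2 (n : ℝ) := by
  rcases eq_or_lt_of_le hn with h1 | h2
  · rw [← h1]; norm_num
  · have hn2 : 2 ≤ n := h2
    have hnR : (2 : ℝ) ≤ (n : ℝ) := by exact_mod_cast hn2
    have hpos : (0 : ℝ) < n := by linarith
    have hexp : 1 + 1 / (n : ℝ) ≤ Real.exp (1 / n) := by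
      have := Real.add_one_le_exp (1 / (n : ℝ)); linarith
    have hpow : (1 + 1 / (n : ℝ)) ^ n ≤ Real.exp 1 := by
      calc (1 + 1 / (n : ℝ)) ^ n ≤ (Real.exp (1 / n)) ^ n :=
            pow_le_pow_left₀ (by positivity) hexp n
        _ = Real.exp ((n : ℝ) * (1 / n)) := by rw [← Real.exp_nat_mul]
        _ = Real.exp 1 := by rw [mul_one_div, div_self (ne_of_gt hpos)]
    have h3 : Real.exp 1 ≤ 3 := by
      have := Real.exp_one_lt_d9; linarith
    have hb : ((n : ℝ) + 1) ^ n ≤ (n : ℝ) ^ n * ((n : ℝ) + 1) := by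
      have heq : ((n : ℝ) + 1) ^ n = (n : ℝ) ^ n * (1 + 1 / (n : ℝ)) ^ n := by
        rw [← mul_pow]; congr 1; field_simp
      rw [heq]
      have h4 : (1 + 1 / (n : ℝ)) ^ n ≤ (n : ℝ) + 1 := le_trans hpow (by linarith)
      have h5 : (0 : ℝ) < (n : ℝ) ^ n := pow_pos hpos n
      nlinarith
    have hmain : ((n : ℝ) + 1) ^ (n - 1) ≤ (n : ℝ) ^ n := by
      have hh : ((n : ℝ) + 1) ^ (n - 1) * ((n : ℝ) + 1) = ((n : ℝ) + 1) ^ n := by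
        rw [← pow_succ]; congr 1; omega
      have hpos1 : (0 : ℝ) < (n : ℝ) + 1 := by linarith
      have := hb
      rw [← hh] at this
      exact le_of_mul_le_mul_right this hpos1
    have hlog := Real.logb_le_logb_of_le one_lt_two (pow_pos (by linarith) (n - 1)) hmain
    rw [Real.logb_pow, Real.logb_pow] at hlog
    have hc : ((n - 1 : ℕ) : ℝ) = (n : ℝ) - 1 := by
      push_cast [hn]; ring
    rw [hc] at hlog
    exact hlog

lemma def_key {m N : ℕ} (hm : 1 ≤ m) (hN : ((m : ℝ) + 1) ≤ 2 ^ N) :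
    ((m : ℝ) + 1) / 2 * Real.logb 2 ((m : ℝ) + 1) ≤
      (N : ℝ) + (m : ℝ) / 2 * Real.logb 2 (m : ℝ) := by
  have hL : Real.logb 2 ((m : ℝ) + 1) ≤ (N : ℝ) := by
    have h1 : Real.logb 2 ((m : ℝ) + 1) ≤ Real.logb 2 ((2 : ℝ) ^ N) :=
      Real.logb_le_logb_of_le one_lt_two (by positivity) hN
    rwa [Real.logb_pow, Real.logb_self_eq_one one_lt_two, mul_one] at h1
  have hK := key_ineq m hm
  have hL0 : 0 ≤ Real.logb 2 ((m : ℝ) + 1) := Real.logb_nonneg one_lt_two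
    (by exact_mod_cast Nat.one_le_iff_ne_zero.2 (by positivity) |>.trans (by push_cast; linarith))
  linarith

end Analysis

section Steps

lemma def_step {m₁ m₂ N₁ N₂ A₁ A₂ : ℝ} (hm₁ : 1 ≤ m₁) (hm₂ : 1 ≤ m₂)
    (IH1 : m₁ / 2 * Real.logb 2 m₁ ≤ N₁ * m₁ - A₁)
    (IH2 : m₂ / 2 * Real.logb 2 m₂ ≤ N₂ * m₂ - A₂)
    (hkey : (m₂ + 1) / 2 * Real.logb 2 (m₂ + 1) ≤ N₂ + m₂ / 2 * Real.logb 2 m₂) :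
    (m₁ * (1 + m₂)) / 2 * Real.logb 2 (m₁ * (1 + m₂)) ≤
      (N₁ + N₂) * (m₁ * (1 + m₂)) - ((1 + m₂) * A₁ + m₁ * A₂) := by
  rw [show (m₂ + 1 : ℝ) = 1 + m₂ from by ring] at hkey
  have hlogmul : Real.logb 2 (m₁ * (1 + m₂)) = Real.logb 2 m₁ + Real.logb 2 (1 + m₂) :=
    Real.logb_mul (by linarith) (by linarith)
  rw [hlogmul]
  have e1 : (1 + m₂) * (m₁ / 2 * Real.logb 2 m₁) ≤ (1 + m₂) * (N₁ * m₁ - A₁) :=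
    mul_le_mul_of_nonneg_left IH1 (by linarith)
  have e2 : m₁ * ((1 + m₂) / 2 * Real.logb 2 (1 + m₂)) ≤ m₁ * ((N₂ * m₂ - A₂) + N₂) :=
    mul_le_mul_of_nonneg_left (by linarith) (by linarith)
  nlinarith [e1, e2]

lemma glob_step {m₁ m₂ N₂ A₁ A₂ T₁ T₂ t₁ t₂ : ℝ} (hm₁ : 1 ≤ m₁) (hm₂ : 1 ≤ m₂)
    (IH1 : T₁ * m₁ ≤ A₁ * t₁) (IH2 : T₂ * m₂ ≤ A₂ * t₂)
    (ht₁ : m₁ ≤ t₁) (ht₂ : m₂ ≤ t₂) (hA₁ : m₁ ≤ A₁) (hA₂ : 0 ≤ A₂)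
    (hT₂N : T₂ ≤ N₂ * t₂) (hN₂ : N₂ ≤ m₂) (hT₁ : 0 ≤ T₁) (hT₂ : 0 ≤ T₂)
    (hN₂0 : 0 ≤ N₂) :
    (T₁ + T₂ + (m₂ * A₁ + m₁ * A₂)) * (m₁ * (1 + m₂)) ≤
      ((1 + m₂) * A₁ + m₁ * A₂) * (t₁ + t₂ + m₁ * m₂) := by
  have ht₂0 : 0 ≤ t₂ := by linarith
  have a : m₁ * (1 + m₂) * T₁ ≤ (1 + m₂) * (A₁ * t₁) := by
    have := mul_le_mul_of_nonneg_left IH1 (show (0:ℝ) ≤ 1 + m₂ by linarith)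
    nlinarith [this]
  have b : m₁ * m₁ * A₂ ≤ m₁ * A₂ * t₁ := by
    nlinarith [mul_nonneg (mul_nonneg (show (0:ℝ) ≤ m₁ by linarith) hA₂)
      (show (0:ℝ) ≤ t₁ - m₁ by linarith)]
  have c : m₁ * m₂ * T₂ ≤ m₁ * (A₂ * t₂) := by
    have := mul_le_mul_of_nonneg_left IH2 (show (0:ℝ) ≤ m₁ by linarith)
    nlinarith [this]
  have d : m₁ * T₂ ≤ (1 + m₂) * A₁ * t₂ := by
    have d1 : m₁ * T₂ ≤ m₁ * (N₂ * t₂) :=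
      mul_le_mul_of_nonneg_left hT₂N (by linarith)
    have d2 : m₁ * (N₂ * t₂) ≤ m₁ * (m₂ * t₂) :=
      mul_le_mul_of_nonneg_left (mul_le_mul_of_nonneg_right hN₂ ht₂0) (by linarith)
    have d3 : m₁ * (m₂ * t₂) ≤ A₁ * (m₂ * t₂) :=
      mul_le_mul_of_nonneg_right hA₁ (by positivity)
    have d4 : A₁ * (m₂ * t₂) ≤ (1 + m₂) * A₁ * t₂ := by nlinarith
    linarith
  nlinarith [a, b, c, d]

end Steps

section TTsec
variable {V : Type*} [Fintype V] {G : SimpleGraph V} {u c : V} {s : Finset V}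

lemma TT_decomp (hT : G.IsAcyclic) (hus : u ∈ s) (huc : G.Adj u c) (hcs : c ∈ s) :
    TT G u s = (TT G u (s \ RR G c (s.erase u)) ∪ TT G c (RR G c (s.erase u))) ∪ JJ G u c s := by
  set Br := RR G c (s.erase u) with hBr
  apply Finset.Subset.antisymm
  · intro S hS
    rw [mem_TT] at hS
    obtain ⟨hne, hSR, hconn⟩ := hS
    have hSs : S ⊆ s := hSR.trans RR_subset
    by_cases hB : (S ∩ Br).Nonempty
    · by_cases hA : (S \ Br).Nonempty
      · obtain ⟨a, ha⟩ := hA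
        obtain ⟨x, hx⟩ := hB
        obtain ⟨huS, hcS⟩ := crossing hT huc hcs hSs hconn (Finset.mem_sdiff.1 ha).1
          (Finset.mem_sdiff.1 ha).2 (Finset.mem_inter.1 hx).1 (Finset.mem_inter.1 hx).2
        have hSA : S ∈ AA G u s := mem_AA.2 ⟨huS, hSs, hconn⟩
        rw [AA_decomp hT hus huc hcs] at hSA
        rcases Finset.mem_union.1 hSA with h | h
        · exact absurd ((mem_AA.1 h).2.1 (Finset.mem_inter.1 hx).1)
            (fun h' => (Finset.mem_sdiff.1 h').2 (Finset.mem_inter.1 hx).2)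
        · exact Finset.mem_union_right _ h
      · refine Finset.mem_union_left _ (Finset.mem_union_right _ (mem_TT.2 ⟨hne, ?_, hconn⟩))
        rw [RR_idem hcs huc.ne']
        intro z hz
        by_contra hzB
        exact hA ⟨z, Finset.mem_sdiff.2 ⟨hz, hzB⟩⟩
    · refine Finset.mem_union_left _ (Finset.mem_union_left _ (mem_TT.2 ⟨hne, ?_, hconn⟩))
      intro z hz
      have hzR := hSR hz
      rw [RR_decomp hT hus huc hcs] at hzR
      rcases Finset.mem_union.1 hzR with h | h
      · exact h
      · exact absurd ⟨z, Finset.mem_inter.2 ⟨hz, h⟩⟩ hB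
  · refine Finset.union_subset (Finset.union_subset ?_ ?_) ?_
    · intro S hS
      rw [mem_TT] at hS ⊢
      refine ⟨hS.1, hS.2.1.trans ?_, hS.2.2⟩
      rw [RR_decomp hT hus huc hcs]
      exact Finset.subset_union_left
    · intro S hS
      rw [mem_TT] at hS ⊢
      refine ⟨hS.1, hS.2.1.trans ?_, hS.2.2⟩
      rw [RR_idem hcs huc.ne', RR_decomp hT hus huc hcs]
      exact Finset.subset_union_right
    · intro S hS
      have : S ∈ AA G u s := by
        rw [AA_decomp hT hus huc hcs]; exact Finset.mem_union_right _ hS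
      exact AA_subset_TT this

lemma TT_disj₁ (huc : G.Adj u c) (hcs : c ∈ s) :
    Disjoint (TT G u (s \ RR G c (s.erase u))) (TT G c (RR G c (s.erase u))) := by
  rw [Finset.disjoint_left]
  intro S h1 h2
  obtain ⟨⟨z, hz⟩, hS1, _⟩ := mem_TT.1 h1
  have hz1 := (mem_TT.1 h1).2.1 hz
  have hz2 := (mem_TT.1 h2).2.1 hz
  rw [RR_idem hcs huc.ne'] at hz2
  exact (Finset.mem_sdiff.1 (RR_subset hz1)).2 hz2

lemma TT_disj₂ (huc : G.Adj u c) (hcs : c ∈ s) :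
    Disjoint (TT G u (s \ RR G c (s.erase u)) ∪ TT G c (RR G c (s.erase u))) (JJ G u c s) := by
  rw [Finset.disjoint_left]
  intro S h1 h2
  obtain ⟨⟨S₁, S₂⟩, hp, rfl⟩ := Finset.mem_image.1 h2
  rw [Finset.mem_product] at hp
  have hcS : c ∈ S₁ ∪ S₂ := Finset.mem_union_right _ (mem_AA.1 hp.2).1
  have huS : u ∈ S₁ ∪ S₂ := Finset.mem_union_left _ (mem_AA.1 hp.1).1
  have hcBr : c ∈ RR G c (s.erase u) := c_mem_Br hcs huc.ne'
  rcases Finset.mem_union.1 h1 with h | h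
  · have := (mem_TT.1 h).2.1 hcS
    exact (Finset.mem_sdiff.1 (RR_subset this)).2 hcBr
  · have := (mem_TT.1 h).2.1 huS
    rw [RR_idem hcs huc.ne'] at this
    exact u_not_mem_Br this

end TTsec
section MainInduction
variable {V : Type*} [Fintype V] {G : SimpleGraph V}

lemma m2_pow_bound {c u : V} {s : Finset V} (hcs : c ∈ s) (hcu : c ≠ u) :
    (AA G c (RR G c (s.erase u))).card + 1 ≤ 2 ^ (RR G c (s.erase u)).card := by
  have hsub : AA G c (RR G c (s.erase u)) ⊆ (RR G c (s.erase u)).powerset.erase ∅ := by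
    intro S hS
    refine Finset.mem_erase.2 ⟨?_, Finset.mem_powerset.2 (mem_AA.1 hS).2.1⟩
    intro h
    rw [h] at hS
    exact absurd (mem_AA.1 hS).1 (by simp)
  have h1 := Finset.card_le_card hsub
  rw [Finset.card_erase_of_mem (Finset.mem_powerset.2 (Finset.empty_subset _)),
    Finset.card_powerset] at h1
  have h2 : 1 ≤ 2 ^ (RR G c (s.erase u)).card := Nat.one_le_two_pow
  omega

lemma step_cards (hu : u ∈ s) {c : V} (huc : G.Adj u c) (hcs : c ∈ s) :
    (s \ RR G c (s.erase u)).card < s.card ∧ (RR G c (s.erase u)).card < s.card := by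
  have hcBr : c ∈ RR G c (s.erase u) := c_mem_Br hcs huc.ne'
  constructor
  · exact Finset.card_lt_card ((Finset.ssubset_iff_of_subset Finset.sdiff_subset).2
      ⟨c, hcs, fun h => (Finset.mem_sdiff.1 h).2 hcBr⟩)
  · have h3 := Finset.card_le_card (RR_subset (G := G) (u := c) (s := s.erase u))
    rw [Finset.card_erase_of_mem hu] at h3
    have : 0 < s.card := Finset.card_pos.2 ⟨u, hu⟩
    omega

lemma card_RR_le_AA (hT : G.IsAcyclic) :
    ∀ (n : ℕ) (s : Finset V) (u : V), s.card ≤ n → u ∈ s →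
      (RR G u s).card ≤ (AA G u s).card := by
  intro n
  induction n with
  | zero =>
      intro s u hc hu
      rw [Nat.le_zero, Finset.card_eq_zero] at hc
      subst hc; exact absurd hu (by simp)
  | succ n ih =>
      intro s u hcard hu
      by_cases hR : RR G u s = {u}
      · rw [hR, base_AA hu hR]; simp
      · obtain ⟨c, huc, hcs⟩ := exists_c hu hR
        obtain ⟨hd1, hd2⟩ := step_cards hu huc hcs
        have hcBr : c ∈ RR G c (s.erase u) := c_mem_Br hcs huc.ne'
        have huB : u ∈ s \ RR G c (s.erase u) := Finset.mem_sdiff.2 ⟨hu, u_not_mem_Br⟩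
        have IH1 := ih (s \ RR G c (s.erase u)) u (by omega) huB
        have IH2 := ih (RR G c (s.erase u)) c (by omega) hcBr
        rw [RR_idem hcs huc.ne'] at IH2
        rw [RR_decomp hT hu huc hcs, AA_decomp hT hu huc hcs,
          Finset.card_union_of_disjoint disjoint_RR_Br,
          Finset.card_union_of_disjoint AA_disj_JJ, card_JJ]
        have m1pos : 0 < (AA G u (s \ RR G c (s.erase u))).card := AA_card_pos huB
        have hle : (AA G c (RR G c (s.erase u))).card ≤
            (AA G u (s \ RR G c (s.erase u))).card * (AA G c (RR G c (s.erase u))).card :=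
          Nat.le_mul_of_pos_left _ m1pos
        omega

lemma def_bound (hT : G.IsAcyclic) :
    ∀ (n : ℕ) (s : Finset V) (u : V), s.card ≤ n → u ∈ s →
      ((AA G u s).card : ℝ) / 2 * Real.logb 2 ((AA G u s).card) ≤
        ((RR G u s).card : ℝ) * ((AA G u s).card : ℝ) - ∑ S ∈ AA G u s, (S.card : ℝ) := by
  intro n
  induction n with
  | zero =>
      intro s u hc hu
      rw [Nat.le_zero, Finset.card_eq_zero] at hc
      subst hc; exact absurd hu (by simp)
  | succ n ih =>
      intro s u hcard hu
      by_cases hR : RR G u s = {u}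
      · rw [hR, base_AA hu hR]; norm_num
      · obtain ⟨c, huc, hcs⟩ := exists_c hu hR
        obtain ⟨hd1, hd2⟩ := step_cards hu huc hcs
        have hcBr : c ∈ RR G c (s.erase u) := c_mem_Br hcs huc.ne'
        have huB : u ∈ s \ RR G c (s.erase u) := Finset.mem_sdiff.2 ⟨hu, u_not_mem_Br⟩
        have IH1 := ih (s \ RR G c (s.erase u)) u (by omega) huB
        have IH2 := ih (RR G c (s.erase u)) c (by omega) hcBr
        rw [RR_idem hcs huc.ne'] at IH2
        have hm₁1 : (1 : ℝ) ≤ ((AA G u (s \ RR G c (s.erase u))).card : ℝ) := by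
          exact_mod_cast AA_card_pos huB
        have hm₂1 : (1 : ℝ) ≤ ((AA G c (RR G c (s.erase u))).card : ℝ) := by
          exact_mod_cast AA_card_pos hcBr
        have hcardA : ((AA G u s).card : ℝ) =
            ((AA G u (s \ RR G c (s.erase u))).card : ℝ) *
              (1 + ((AA G c (RR G c (s.erase u))).card : ℝ)) := by
          rw [AA_decomp hT hu huc hcs, Finset.card_union_of_disjoint AA_disj_JJ, card_JJ]
          push_cast; ring
        have hsumA : ∑ S ∈ AA G u s, (S.card : ℝ) =
            (1 + ((AA G c (RR G c (s.erase u))).card : ℝ)) *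
                (∑ S ∈ AA G u (s \ RR G c (s.erase u)), (S.card : ℝ)) +
              ((AA G u (s \ RR G c (s.erase u))).card : ℝ) *
                (∑ S ∈ AA G c (RR G c (s.erase u)), (S.card : ℝ)) := by
          rw [AA_decomp hT hu huc hcs, Finset.sum_union AA_disj_JJ, sum_JJ]
          push_cast; ring
        have hcardR : ((RR G u s).card : ℝ) =
            ((RR G u (s \ RR G c (s.erase u))).card : ℝ) + ((RR G c (s.erase u)).card : ℝ) := by
          rw [RR_decomp hT hu huc hcs, Finset.card_union_of_disjoint disjoint_RR_Br]
          push_cast; ring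
        have hNpow : ((AA G c (RR G c (s.erase u))).card : ℝ) + 1 ≤
            2 ^ (RR G c (s.erase u)).card := by
          exact_mod_cast m2_pow_bound (G := G) hcs huc.ne'
        have hkey := def_key (m := (AA G c (RR G c (s.erase u))).card)
          (N := (RR G c (s.erase u)).card) (AA_card_pos hcBr) hNpow
        rw [hcardA, hsumA, hcardR]
        exact def_step hm₁1 hm₂1 IH1 IH2 hkey

lemma glob_bound (hT : G.IsAcyclic) :
    ∀ (n : ℕ) (s : Finset V) (u : V), s.card ≤ n → u ∈ s →
      (∑ S ∈ TT G u s, (S.card : ℝ)) * ((AA G u s).card : ℝ) ≤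
        (∑ S ∈ AA G u s, (S.card : ℝ)) * ((TT G u s).card : ℝ) := by
  intro n
  induction n with
  | zero =>
      intro s u hc hu
      rw [Nat.le_zero, Finset.card_eq_zero] at hc
      subst hc; exact absurd hu (by simp)
  | succ n ih =>
      intro s u hcard hu
      by_cases hR : RR G u s = {u}
      · rw [base_AA hu hR, base_TT hu hR]
      · obtain ⟨c, huc, hcs⟩ := exists_c hu hR
        obtain ⟨hd1, hd2⟩ := step_cards hu huc hcs
        have hcBr : c ∈ RR G c (s.erase u) := c_mem_Br hcs huc.ne'
        have huB : u ∈ s \ RR G c (s.erase u) := Finset.mem_sdiff.2 ⟨hu, u_not_mem_Br⟩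
        have IH1 := ih (s \ RR G c (s.erase u)) u (by omega) huB
        have IH2 := ih (RR G c (s.erase u)) c (by omega) hcBr
        have hm₁1 : (1 : ℝ) ≤ ((AA G u (s \ RR G c (s.erase u))).card : ℝ) := by
          exact_mod_cast AA_card_pos huB
        have hm₂1 : (1 : ℝ) ≤ ((AA G c (RR G c (s.erase u))).card : ℝ) := by
          exact_mod_cast AA_card_pos hcBr
        have hcardA : ((AA G u s).card : ℝ) =
            ((AA G u (s \ RR G c (s.erase u))).card : ℝ) *
              (1 + ((AA G c (RR G c (s.erase u))).card : ℝ)) := by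
          rw [AA_decomp hT hu huc hcs, Finset.card_union_of_disjoint AA_disj_JJ, card_JJ]
          push_cast; ring
        have hsumA : ∑ S ∈ AA G u s, (S.card : ℝ) =
            (1 + ((AA G c (RR G c (s.erase u))).card : ℝ)) *
                (∑ S ∈ AA G u (s \ RR G c (s.erase u)), (S.card : ℝ)) +
              ((AA G u (s \ RR G c (s.erase u))).card : ℝ) *
                (∑ S ∈ AA G c (RR G c (s.erase u)), (S.card : ℝ)) := by
          rw [AA_decomp hT hu huc hcs, Finset.sum_union AA_disj_JJ, sum_JJ]
          push_cast; ring
        have hcardT : ((TT G u s).card : ℝ) =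
            ((TT G u (s \ RR G c (s.erase u))).card : ℝ) +
              ((TT G c (RR G c (s.erase u))).card : ℝ) +
              ((AA G u (s \ RR G c (s.erase u))).card : ℝ) *
                ((AA G c (RR G c (s.erase u))).card : ℝ) := by
          rw [TT_decomp hT hu huc hcs, Finset.card_union_of_disjoint (TT_disj₂ huc hcs),
            Finset.card_union_of_disjoint (TT_disj₁ huc hcs), card_JJ]
          push_cast; ring
        have hsumT : ∑ S ∈ TT G u s, (S.card : ℝ) =
            (∑ S ∈ TT G u (s \ RR G c (s.erase u)), (S.card : ℝ)) +
              (∑ S ∈ TT G c (RR G c (s.erase u)), (S.card : ℝ)) +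
              (((AA G c (RR G c (s.erase u))).card : ℝ) *
                  (∑ S ∈ AA G u (s \ RR G c (s.erase u)), (S.card : ℝ)) +
                ((AA G u (s \ RR G c (s.erase u))).card : ℝ) *
                  (∑ S ∈ AA G c (RR G c (s.erase u)), (S.card : ℝ))) := by
          rw [TT_decomp hT hu huc hcs, Finset.sum_union (TT_disj₂ huc hcs),
            Finset.sum_union (TT_disj₁ huc hcs), sum_JJ]
        have ht₁ : ((AA G u (s \ RR G c (s.erase u))).card : ℝ) ≤
            ((TT G u (s \ RR G c (s.erase u))).card : ℝ) := by
          exact_mod_cast Finset.card_le_card (AA_subset_TT (G := G))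
        have ht₂ : ((AA G c (RR G c (s.erase u))).card : ℝ) ≤
            ((TT G c (RR G c (s.erase u))).card : ℝ) := by
          exact_mod_cast Finset.card_le_card (AA_subset_TT (G := G))
        have hA₁ := one_le_sumA (G := G) huB
        have hA₂ : (0:ℝ) ≤ ∑ S ∈ AA G c (RR G c (s.erase u)), (S.card : ℝ) :=
          Finset.sum_nonneg fun S _ => by positivity
        have hT₂N : (∑ S ∈ TT G c (RR G c (s.erase u)), (S.card : ℝ)) ≤
            ((RR G c (s.erase u)).card : ℝ) * ((TT G c (RR G c (s.erase u))).card : ℝ) := by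
          have := sumT_le_card_mul (G := G) hcBr
          rwa [RR_idem hcs huc.ne'] at this
        have hN₂ : ((RR G c (s.erase u)).card : ℝ) ≤
            ((AA G c (RR G c (s.erase u))).card : ℝ) := by
          have := card_RR_le_AA hT (RR G c (s.erase u)).card (RR G c (s.erase u)) c le_rfl hcBr
          rw [RR_idem hcs huc.ne'] at this
          exact_mod_cast this
        have hT₁0 : (0:ℝ) ≤ ∑ S ∈ TT G u (s \ RR G c (s.erase u)), (S.card : ℝ) :=
          Finset.sum_nonneg fun S _ => by positivity
        have hT₂0 : (0:ℝ) ≤ ∑ S ∈ TT G c (RR G c (s.erase u)), (S.card : ℝ) :=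
          Finset.sum_nonneg fun S _ => by positivity
        have hN₂0 : (0:ℝ) ≤ ((RR G c (s.erase u)).card : ℝ) := by positivity
        rw [hcardA, hsumA, hcardT, hsumT]
        have := glob_step hm₁1 hm₂1 IH1 IH2 ht₁ ht₂ hA₁ hA₂ hT₂N hN₂ hT₁0 hT₂0 hN₂0
        calc _ ≤ ((1 + ((AA G c (RR G c (s.erase u))).card : ℝ)) *
                (∑ S ∈ AA G u (s \ RR G c (s.erase u)), (S.card : ℝ)) +
              ((AA G u (s \ RR G c (s.erase u))).card : ℝ) *
                (∑ S ∈ AA G c (RR G c (s.erase u)), (S.card : ℝ))) *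
              (((TT G u (s \ RR G c (s.erase u))).card : ℝ) +
                ((TT G c (RR G c (s.erase u))).card : ℝ) +
                ((AA G u (s \ RR G c (s.erase u))).card : ℝ) *
                  ((AA G c (RR G c (s.erase u))).card : ℝ)) := by
              convert this using 1 <;> ring
        _ = _ := by ring

end MainInduction

section Final
variable {V : Type*} [Fintype V] {G : SimpleGraph V}

lemma walk_to_reach {a b : V} (w : G.Walk a b) : Reach G Finset.univ a b := by
  induction w with
  | nil => exact Relation.ReflTransGen.refl
  | cons h p ih => exact Relation.ReflTransGen.head ⟨h, Finset.mem_univ _, Finset.mem_univ _⟩ ih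

lemma RR_univ (hconn : G.Connected) (r : V) : RR G r Finset.univ = Finset.univ := by
  apply Finset.Subset.antisymm RR_subset
  intro x _
  obtain ⟨w⟩ := hconn.preconnected r x
  exact mem_RR.2 ⟨Finset.mem_univ _, walk_to_reach w⟩

end Final
end Stmt15Aux

open Stmt15Aux in
/-- Let `T` be a tree on `n` vertices and `r` a vertex contained in more than half of
all subtrees of `T`. Then `μ_T ≤ μ_T(r) = n − Δ(T) ≤ n − (1/2)·log₂ σ(T) + 1/2`. -/
theorem stmt15 {V : Type*} [Fintype V] (G : SimpleGraph V) (hG : G.IsTree) (r : V)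
    (hr : (subtrees G).card < 2 * (subtreesThrough G r).card) :
    (∑ s ∈ subtrees G, (s.card : ℝ)) / (subtrees G).card ≤
      (∑ s ∈ subtreesThrough G r, (s.card : ℝ)) / (subtreesThrough G r).card ∧
    (∑ s ∈ subtreesThrough G r, (s.card : ℝ)) / (subtreesThrough G r).card =
      (Fintype.card V : ℝ) -
        ((Fintype.card V : ℝ) -
          (∑ s ∈ subtreesThrough G r, (s.card : ℝ)) / (subtreesThrough G r).card) ∧
    (∑ s ∈ subtreesThrough G r, (s.card : ℝ)) / (subtreesThrough G r).card ≤
      (Fintype.card V : ℝ) - (1 / 2) * Real.logb 2 ((subtrees G).card) + 1 / 2 := by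
  have hRuniv : RR G r Finset.univ = Finset.univ := RR_univ hG.1 r
  have hsub : subtrees G = TT G r Finset.univ := by
    apply Finset.ext
    intro S
    rw [mem_TT, subtrees, Finset.mem_filter]
    constructor
    · rintro ⟨_, h1, h2⟩
      exact ⟨h1, by rw [hRuniv]; exact Finset.subset_univ S, h2⟩
    · rintro ⟨h1, _, h2⟩
      exact ⟨Finset.mem_univ _, h1, h2⟩
  have hthr : subtreesThrough G r = AA G r Finset.univ := by
    apply Finset.ext
    intro S
    rw [mem_AA, subtreesThrough, Finset.mem_filter]
    constructor
    · rintro ⟨_, h1, h2⟩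
      exact ⟨h1, Finset.subset_univ S, h2⟩
    · rintro ⟨h1, _, h2⟩
      exact ⟨Finset.mem_univ _, h1, h2⟩
  rw [hsub, hthr] at hr ⊢
  have hru : r ∈ (Finset.univ : Finset V) := Finset.mem_univ r
  have hmpos : 0 < (AA G r Finset.univ).card := AA_card_pos hru
  have htpos : 0 < (TT G r Finset.univ).card :=
    lt_of_lt_of_le hmpos (Finset.card_le_card AA_subset_TT)
  have hmR : (0:ℝ) < ((AA G r Finset.univ).card : ℝ) := by exact_mod_cast hmpos
  have htR : (0:ℝ) < ((TT G r Finset.univ).card : ℝ) := by exact_mod_cast htpos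
  refine ⟨?_, by ring, ?_⟩
  · rw [div_le_div_iff₀ htR hmR]
    exact glob_bound hG.2 Finset.univ.card Finset.univ r le_rfl hru
  · have hdef := def_bound hG.2 Finset.univ.card Finset.univ r le_rfl hru
    rw [hRuniv, Finset.card_univ] at hdef
    have h1 : (∑ S ∈ AA G r Finset.univ, (S.card : ℝ)) / ((AA G r Finset.univ).card : ℝ) ≤
        (Fintype.card V : ℝ) - 1 / 2 * Real.logb 2 ((AA G r Finset.univ).card : ℝ) := by
      rw [div_le_iff₀ hmR]
      nlinarith [hdef]
    have ht2m : ((TT G r Finset.univ).card : ℝ) ≤ 2 * ((AA G r Finset.univ).card : ℝ) := by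
      exact_mod_cast le_of_lt hr
    have hlogt : Real.logb 2 ((TT G r Finset.univ).card : ℝ) ≤
        1 + Real.logb 2 ((AA G r Finset.univ).card : ℝ) := by
      have := Real.logb_le_logb_of_le one_lt_two htR ht2m
      rwa [Real.logb_mul (by norm_num) (ne_of_gt hmR), Real.logb_self_eq_one one_lt_two] at this
    linarith
end

section
/- For a broom with path of length a ≥ 0 and b ≥ 1 leaves, with n = a + b + 1 and b = ⌈2·log₂ n⌉, the local mean subtree order at the far end of the path is at least n − log₂ n − 3/2 (for n large enough that a ≥ 0 holds, i.e. n ≥ b + 1). -/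
open scoped Classical

/-- The broom with a handle of length `a` and `b` leaves: vertices `0,…,a` form a path
and vertices `a+1,…,a+b` are leaves attached to vertex `a`. The root is vertex `0`. -/
def broom (a b : ℕ) : SimpleGraph (Fin (a + b + 1)) :=
  SimpleGraph.fromRel (fun i j =>
    (i.val + 1 = j.val ∧ j.val ≤ a) ∨ (i.val = a ∧ a < j.val))

section Broom
variable {a b : ℕ}

lemma broom_adj (v w : Fin (a+b+1)) : (broom a b).Adj v w ↔ v ≠ w ∧
    (((v.val + 1 = w.val ∧ w.val ≤ a) ∨ (v.val = a ∧ a < w.val)) ∨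
     ((w.val + 1 = v.val ∧ v.val ≤ a) ∨ (w.val = a ∧ a < v.val))) := by
  simp [broom, SimpleGraph.fromRel_adj]

lemma cut_lemma {s : Finset (Fin (a+b+1))} {j : Fin (a+b+1)} (hja : j.val ≤ a)
    (hjs : j ∉ s) {v w : Fin (a+b+1)} (hv : v ∈ s) (hw : w ∈ s)
    (hadj : (broom a b).Adj v w) (hvj : v.val < j.val) : w.val < j.val := by
  rw [broom_adj] at hadj
  obtain ⟨hne, h⟩ := hadj
  have hvne : v ≠ j := fun h => hjs (h ▸ hv)
  have hwne : w ≠ j := fun h => hjs (h ▸ hw)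
  have hwv : w.val ≠ j.val := fun h => hwne (Fin.ext h)
  rcases h with (⟨h1, h2⟩ | ⟨h1, h2⟩) | (⟨h1, h2⟩ | ⟨h1, h2⟩) <;> omega

lemma reach_lemma {s : Finset (Fin (a+b+1))} {j : Fin (a+b+1)} (hja : j.val ≤ a)
    (hjs : j ∉ s) {x y : (s : Set (Fin (a+b+1)))}
    (h : ((broom a b).induce (s : Set (Fin (a+b+1)))).Reachable x y)
    (hx : (x : Fin (a+b+1)).val < j.val) : (y : Fin (a+b+1)).val < j.val := by
  obtain ⟨p⟩ := h
  induction p with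
  | nil => exact hx
  | cons hadj p ih =>
    exact ih (cut_lemma hja hjs (Finset.mem_coe.mp (Subtype.mem _)) (Finset.mem_coe.mp (Subtype.mem _)) hadj hx)

end Broom

section Broom2
variable {a b : ℕ}

lemma broom_subtree_down {s : Finset (Fin (a+b+1))}
    (hc : ((broom a b).induce (s : Set (Fin (a+b+1)))).Connected)
    (h0 : (⟨0, Nat.succ_pos _⟩ : Fin (a+b+1)) ∈ s) :
    ∀ v ∈ s, ∀ u : Fin (a+b+1), u.val ≤ a → u.val < v.val → u ∈ s := by
  intro v hv u hua huv
  by_contra hus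
  have h0u : (0 : ℕ) < u.val := by
    rcases Nat.eq_zero_or_pos u.val with h | h
    · exact absurd (show u = ⟨0, Nat.succ_pos _⟩ from Fin.ext h) (fun h' => hus (h' ▸ h0))
    · exact h
  have := reach_lemma hua hus
    (hc.preconnected ⟨⟨0, Nat.succ_pos _⟩, Finset.mem_coe.mpr h0⟩ ⟨v, Finset.mem_coe.mpr hv⟩)
    (by simpa using h0u)
  simp only at this
  omega

lemma broom_connected_of {s : Finset (Fin (a+b+1))}
    (h0 : (⟨0, Nat.succ_pos _⟩ : Fin (a+b+1)) ∈ s)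
    (hD : ∀ v ∈ s, ∀ u : Fin (a+b+1), u.val ≤ a → u.val < v.val → u ∈ s) :
    ((broom a b).induce (s : Set (Fin (a+b+1)))).Connected := by
  rw [SimpleGraph.connected_iff]
  set r : (s : Set (Fin (a+b+1))) := ⟨⟨0, Nat.succ_pos _⟩, Finset.mem_coe.mpr h0⟩ with hr
  refine ⟨?_, ⟨r⟩⟩
  have key : ∀ m : ℕ, ∀ v : (s : Set (Fin (a+b+1))), (v : Fin (a+b+1)).val = m →
      ((broom a b).induce (s : Set (Fin (a+b+1)))).Reachable v r := by
    intro m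
    induction m using Nat.strong_induction_on with
    | _ m ih =>
      intro v hvm
      rcases Nat.eq_zero_or_pos m with h | h
      · have : v = r := Subtype.ext (Fin.ext (by rw [hvm, h]))
        rw [this]
      have hvs : (v : Fin (a+b+1)) ∈ s := Finset.mem_coe.mp v.2
      by_cases hm : m ≤ a
      · set u : Fin (a+b+1) := ⟨m-1, by omega⟩ with hu
        have hus : u ∈ s := hD _ hvs u (by simp [hu]; omega) (by simp [hu]; omega)
        have hadj : (broom a b).Adj (v : Fin (a+b+1)) u := by
          rw [broom_adj]
          refine ⟨fun h => by rw [← h] at hu; simp [Fin.ext_iff] at hu; omega, ?_⟩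
          right; left; exact ⟨by simp [hu]; omega, by omega⟩
        have hadj' : ((broom a b).induce (s : Set (Fin (a+b+1)))).Adj v ⟨u, hus⟩ := hadj
        exact hadj'.reachable.trans (ih (m-1) (by omega) ⟨u, hus⟩ rfl)
      · set u : Fin (a+b+1) := ⟨a, by omega⟩ with hu
        have hus : u ∈ s := hD _ hvs u (by simp [hu]) (by simp [hu]; omega)
        have hadj : (broom a b).Adj (v : Fin (a+b+1)) u := by
          rw [broom_adj]
          refine ⟨fun h => by rw [← h] at hu; simp [Fin.ext_iff] at hu; omega, ?_⟩
          right; right; exact ⟨by simp [hu], by omega⟩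
        have hadj' : ((broom a b).induce (s : Set (Fin (a+b+1)))).Adj v ⟨u, hus⟩ := hadj
        exact hadj'.reachable.trans (ih a (by omega) ⟨u, hus⟩ rfl)
  intro x y
  exact (key _ x rfl).trans (key _ y rfl).symm

end Broom2

section Broom3
variable (a b : ℕ)

def pathF (k : ℕ) : Finset (Fin (a+b+1)) := Finset.univ.filter (fun v => v.val ≤ k)
def leavesF : Finset (Fin (a+b+1)) := Finset.univ.filter (fun v => a < v.val)

variable {a b}

lemma mem_pathF {k : ℕ} {v : Fin (a+b+1)} : v ∈ pathF a b k ↔ v.val ≤ k := by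
  simp [pathF]

lemma mem_leavesF {v : Fin (a+b+1)} : v ∈ leavesF a b ↔ a < v.val := by
  simp [leavesF]

lemma subtreesThrough_broom_eq :
    subtreesThrough (broom a b) ⟨0, Nat.succ_pos _⟩ =
      (Finset.range a).image (pathF a b) ∪
      (leavesF a b).powerset.image (fun L => pathF a b a ∪ L) := by
  ext s
  simp only [subtreesThrough, Finset.mem_filter, Finset.mem_univ, true_and,
    Finset.mem_union, Finset.mem_image, Finset.mem_range, Finset.mem_powerset]
  constructor
  · rintro ⟨h0, hc⟩
    have hD := broom_subtree_down hc h0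
    by_cases hva : (⟨a, by omega⟩ : Fin (a+b+1)) ∈ s
    · right
      refine ⟨s \ pathF a b a, fun v hv => ?_, ?_⟩
      · rw [Finset.mem_sdiff, mem_pathF] at hv
        rw [mem_leavesF]; omega
      · ext v
        rw [Finset.union_sdiff_self_eq_union, Finset.mem_union, mem_pathF]
        constructor
        · rintro (hv | hv)
          · rcases Nat.eq_or_lt_of_le hv with h | h
            · exact (Fin.ext h : v = ⟨a, by omega⟩) ▸ hva
            · exact hD _ hva v (by omega) h
          · exact hv
        · exact fun h => Or.inr h
    · left
      have hlt : ∀ v ∈ s, v.val < a := by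
        intro v hv
        rcases lt_trichotomy v.val a with h | h | h
        · exact h
        · exact absurd ((Fin.ext h : v = ⟨a, by omega⟩) ▸ hv) hva
        · exact absurd (hD v hv ⟨a, by omega⟩ le_rfl h) hva
      have hne : (s.image Fin.val).Nonempty := ⟨0, Finset.mem_image.mpr ⟨_, h0, rfl⟩⟩
      obtain ⟨w, hws, hwk⟩ := Finset.mem_image.mp ((s.image Fin.val).max'_mem hne)
      refine ⟨w.val, hlt w hws, ?_⟩
      ext v
      rw [mem_pathF]
      constructor
      · intro hv
        rcases Nat.eq_or_lt_of_le hv with h | h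
        · have hvw : v = w := Fin.ext h
          rwa [hvw]
        · exact hD w hws v (by have := hlt w hws; omega) h
      · intro hv
        have := Finset.le_max' (s.image Fin.val) v.val (Finset.mem_image.mpr ⟨v, hv, rfl⟩)
        omega
  · intro h
    have h0 : (⟨0, Nat.succ_pos _⟩ : Fin (a+b+1)) ∈ s := by
      rcases h with ⟨k, _, rfl⟩ | ⟨L, _, rfl⟩
      · rw [mem_pathF]; exact Nat.zero_le _
      · rw [Finset.mem_union]; left; rw [mem_pathF]; exact Nat.zero_le _
    refine ⟨h0, broom_connected_of h0 ?_⟩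
    intro v hv u hua huv
    rcases h with ⟨k, hka, rfl⟩ | ⟨L, hL, rfl⟩
    · rw [mem_pathF] at hv ⊢; omega
    · rw [Finset.mem_union, mem_pathF] at hv ⊢
      left
      rcases hv with hv | hv
      · omega
      · exact hua
end Broom3

lemma sum_powerset_card' {α : Type*} [DecidableEq α] (s : Finset α) :
    (∑ t ∈ s.powerset, t.card) * 2 = s.card * 2 ^ s.card := by
  induction s using Finset.induction_on with
  | empty => simp
  | @insert x s hx ih =>
    have hdisj : Disjoint s.powerset (s.powerset.image (insert x)) := by
      rw [Finset.disjoint_left]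
      intro t ht ht'
      obtain ⟨u, hu, rfl⟩ := Finset.mem_image.mp ht'
      exact hx (Finset.mem_powerset.mp ht (Finset.mem_insert_self x u))
    have hinj : ∀ u ∈ s.powerset, ∀ v ∈ s.powerset, insert x u = insert x v → u = v := by
      intro u hu v hv h
      have hxu : x ∉ u := fun h' => hx (Finset.mem_powerset.mp hu h')
      have hxv : x ∉ v := fun h' => hx (Finset.mem_powerset.mp hv h')
      rw [← Finset.erase_insert hxu, ← Finset.erase_insert hxv, h]
    rw [Finset.powerset_insert, Finset.sum_union hdisj, Finset.sum_image hinj]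
    have hcard : ∀ t ∈ s.powerset, (insert x t).card = t.card + 1 := by
      intro t ht
      exact Finset.card_insert_of_notMem (fun h' => hx (Finset.mem_powerset.mp ht h'))
    rw [Finset.sum_congr rfl hcard, Finset.sum_add_distrib, Finset.sum_const,
      Finset.card_powerset, Finset.card_insert_of_notMem hx]
    have : 2 ^ (s.card + 1) = 2 ^ s.card * 2 := pow_succ 2 s.card
    rw [this]
    simp only [smul_eq_mul, mul_one]
    zify at ih ⊢
    linear_combination 2 * ih

section Broom4
variable {a b : ℕ}

lemma card_pathF {k : ℕ} (hk : k ≤ a) : (pathF a b k).card = k + 1 := by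
  have : pathF a b k = Finset.attachFin (Finset.range (k+1)) (fun m hm => by
      rw [Finset.mem_range] at hm; omega) := by
    ext v
    simp [mem_pathF, Finset.mem_attachFin, Nat.lt_succ_iff]
  rw [this, Finset.card_attachFin, Finset.card_range]

lemma card_leavesF : (leavesF a b).card = b := by
  have : leavesF a b = Finset.attachFin (Finset.Ico (a+1) (a+b+1)) (fun m hm => by
      rw [Finset.mem_Ico] at hm; omega) := by
    ext v
    simp only [mem_leavesF, Finset.mem_attachFin, Finset.mem_Ico]
    omega
  rw [this, Finset.card_attachFin, Nat.card_Ico]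
  omega

lemma va_not_mem_pathF {k : ℕ} (hk : k < a) : (⟨a, by omega⟩ : Fin (a+b+1)) ∉ pathF a b k := by
  intro h
  exact absurd (show a ≤ k from mem_pathF.mp h) (by omega)

lemma disjoint_pathF_leaves {L : Finset (Fin (a+b+1))} (hL : L ⊆ leavesF a b) :
    Disjoint (pathF a b a) L := by
  rw [Finset.disjoint_left]
  intro v hv hv'
  have := mem_leavesF.mp (hL hv')
  have := mem_pathF.mp hv
  omega

lemma broom_count :
    (subtreesThrough (broom a b) ⟨0, Nat.succ_pos _⟩).card = a + 2^b ∧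
    (∑ s ∈ subtreesThrough (broom a b) ⟨0, Nat.succ_pos _⟩, s.card) * 2 =
      a*(a+1) + 2^(b+1)*(a+1) + b*2^b := by
  rw [subtreesThrough_broom_eq]
  have hinj1 : ∀ k ∈ Finset.range a, ∀ l ∈ Finset.range a,
      pathF a b k = pathF a b l → k = l := by
    intro k hk l hl h
    rw [Finset.mem_range] at hk hl
    have h1 : k ≤ l := mem_pathF.mp
      (h ▸ mem_pathF.mpr (le_rfl : ((⟨k, by omega⟩ : Fin (a+b+1))).val ≤ k))
    have h2 : l ≤ k := mem_pathF.mp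
      (h.symm ▸ mem_pathF.mpr (le_rfl : ((⟨l, by omega⟩ : Fin (a+b+1))).val ≤ l))
    omega
  have hinj2 : ∀ L ∈ (leavesF a b).powerset, ∀ M ∈ (leavesF a b).powerset,
      pathF a b a ∪ L = pathF a b a ∪ M → L = M := by
    intro L hL M hM h
    rw [Finset.mem_powerset] at hL hM
    rw [← Finset.union_sdiff_cancel_left (disjoint_pathF_leaves hL),
      ← Finset.union_sdiff_cancel_left (disjoint_pathF_leaves hM), h]
  have hdisj : Disjoint ((Finset.range a).image (pathF a b))
      (((leavesF a b).powerset).image (fun L => pathF a b a ∪ L)) := by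
    rw [Finset.disjoint_left]
    intro t ht ht'
    obtain ⟨k, hk, rfl⟩ := Finset.mem_image.mp ht
    obtain ⟨L, hL, hLe⟩ := Finset.mem_image.mp ht'
    have : (⟨a, by omega⟩ : Fin (a+b+1)) ∈ pathF a b a ∪ L :=
      Finset.mem_union_left _ (mem_pathF.mpr le_rfl)
    rw [hLe] at this
    exact va_not_mem_pathF (Finset.mem_range.mp hk) this
  constructor
  · rw [Finset.card_union_of_disjoint hdisj, Finset.card_image_of_injOn hinj1,
      Finset.card_image_of_injOn hinj2, Finset.card_range, Finset.card_powerset,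
      card_leavesF]
  · rw [Finset.sum_union hdisj, Finset.sum_image hinj1, Finset.sum_image hinj2]
    have e1 : ∑ k ∈ Finset.range a, (pathF a b (k:ℕ) : Finset (Fin (a+b+1))).card
        = ∑ k ∈ Finset.range a, (k + 1) :=
      Finset.sum_congr rfl (fun k hk => card_pathF (by
        rw [Finset.mem_range] at hk; omega))
    have e2 : ∑ L ∈ (leavesF a b).powerset, (pathF a b a ∪ L).card
        = ∑ L ∈ (leavesF a b).powerset, ((a+1) + L.card) := by
      refine Finset.sum_congr rfl (fun L hL => ?_)
      rw [Finset.card_union_of_disjoint (disjoint_pathF_leaves (Finset.mem_powerset.mp hL)),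
        card_pathF le_rfl]
    have A1 : (∑ k ∈ Finset.range a, (k + 1)) * 2 = a * (a+1) := by
      have h1 := Finset.sum_range_id_mul_two (a+1)
      rw [Finset.sum_range_succ'] at h1
      simp only [add_zero, Nat.add_sub_cancel] at h1
      rw [h1, mul_comm]
    have A2 : (∑ L ∈ (leavesF a b).powerset, ((a+1) + L.card)) * 2
        = 2^(b+1)*(a+1) + b*2^b := by
      rw [Finset.sum_add_distrib, Finset.sum_const, Finset.card_powerset, card_leavesF,
        smul_eq_mul]
      have g2 := sum_powerset_card' (leavesF a b)
      rw [card_leavesF] at g2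
      rw [add_mul, g2, pow_succ]
      ring
    rw [e1, e2, add_mul, A1, A2, add_assoc]

end Broom4

/-- For the broom with `n = a + b + 1` vertices and `b = ⌈2·log₂ n⌉` leaves, the local
mean subtree order at the far end `r` of the path is at least `n − log₂ n − 3/2`. -/
theorem stmt16 (n a b : ℕ) (hn : 2 ≤ n) (hb : b = ⌈2 * Real.logb 2 n⌉₊)
    (hnab : n = a + b + 1) :
    (n : ℝ) - Real.logb 2 n - 3 / 2 ≤
      (∑ s ∈ subtreesThrough (broom a b) ⟨0, Nat.succ_pos _⟩, (s.card : ℝ)) /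
        (subtreesThrough (broom a b) ⟨0, Nat.succ_pos _⟩).card := by
  obtain ⟨hcard, hsum⟩ := broom_count (a := a) (b := b)
  set T := subtreesThrough (broom a b) (⟨0, Nat.succ_pos _⟩ : Fin (a+b+1)) with hT
  have hnr : (n : ℝ) = (a : ℝ) + b + 1 := by exact_mod_cast congrArg (Nat.cast : ℕ → ℝ) hnab
  have hlog0 : 0 ≤ Real.logb 2 n :=
    Real.logb_nonneg one_lt_two (by exact_mod_cast Nat.one_le_of_lt hn)
  -- b bounds
  have hb1 : (b : ℝ) ≤ 2 * Real.logb 2 n + 1 := by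
    rw [hb]
    exact le_of_lt (Nat.ceil_lt_add_one (by linarith))
  have hb2 : 2 * Real.logb 2 n ≤ (b : ℝ) := by rw [hb]; exact Nat.le_ceil _
  -- n^2 ≤ 2^b
  have hnpos : (0:ℝ) < n := by positivity
  have h2b : (n : ℝ)^2 ≤ (2:ℝ)^b := by
    have h1 : (2:ℝ) ^ (Real.logb 2 n) = n := Real.rpow_logb two_pos (by norm_num) hnpos
    have h2 : (n:ℝ)^2 = (2:ℝ) ^ (2 * Real.logb 2 n) := by
      rw [two_mul, Real.rpow_add two_pos, h1]; ring
    have h3 : (2:ℝ) ^ (2 * Real.logb 2 n) ≤ (2:ℝ) ^ ((b:ℕ):ℝ) :=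
      Real.rpow_le_rpow_of_exponent_le one_le_two hb2
    rw [Real.rpow_natCast] at h3
    exact h2 ▸ h3
  -- cast the counting facts
  have hcardR : ((T.card : ℕ) : ℝ) = (a : ℝ) + 2^b := by rw [hcard]; push_cast; ring
  have hNpos : (0:ℝ) < (T.card : ℝ) := by
    rw [hcardR]; positivity
  have hsumR : (∑ s ∈ T, (s.card : ℝ)) * 2
      = (a:ℝ)*(a+1) + 2^(b+1)*(a+1) + (b:ℝ)*2^b := by
    rw [← Nat.cast_sum]
    exact_mod_cast congrArg (Nat.cast : ℕ → ℝ) hsum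
  -- an ≤ N
  have han : (a:ℝ) * n ≤ (T.card : ℝ) := by
    rw [hcardR]
    have h1 : (a:ℝ) * n ≤ (n:ℝ) * n := by
      apply mul_le_mul_of_nonneg_right _ hnpos.le
      rw [hnr]
      have : (0:ℝ) ≤ b := Nat.cast_nonneg b
      linarith
    nlinarith [h2b]
  -- key identity : 2*S = 2nN - bN - an
  have hid : (∑ s ∈ T, (s.card : ℝ)) * 2
      = 2*(n:ℝ)*(T.card:ℝ) - (b:ℝ)*(T.card:ℝ) - (a:ℝ)*n := by
    rw [hsumR, hcardR, hnr]
    ring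
  rw [le_div_iff₀ hNpos]
  nlinarith [hid, han, mul_nonneg (sub_nonneg.mpr hb1) hNpos.le, hNpos.le]
end

section
/- Along any path in a tree T, the function v ↦ σ_v(T) counting subtrees of T containing v is unimodal: on any path from one vertex to another, its minimum over the path vertices is attained at one of the two endpoints. Consequently, for any threshold c, the set of vertices v with σ_v(T) ≥ c induces a connected subgraph of T. -/
open scoped Classical

section Aux

variable {V : Type*} [Fintype V] {G : SimpleGraph V}

/-- Subtrees containing `x` but not `y`. -/
noncomputable def Aset (G : SimpleGraph V) (x y : V) : Finset (Finset V) :=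
  Finset.univ.filter (fun s => x ∈ s ∧ y ∉ s ∧ (G.induce (s : Set V)).Connected)

lemma lift_walk {S : Set V} {u v : V} (p : G.Walk u v) (hs : ∀ w ∈ p.support, w ∈ S) :
    (G.induce S).Reachable ⟨u, hs u p.start_mem_support⟩ ⟨v, hs v p.end_mem_support⟩ := by
  induction p with
  | nil => rfl
  | @cons a b c h q ih =>
    have hb : b ∈ S := hs b (by simp)
    have hadj : (G.induce S).Adj ⟨a, hs a (by simp)⟩ ⟨b, hb⟩ := h
    exact hadj.reachable.trans (ih (fun w hw => hs w (by simp [hw])))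

lemma walk_out {S : Set V} {a b : ↥S} (q : (G.induce S).Walk a b) :
    ∃ p : G.Walk (a : V) (b : V), ∀ w ∈ p.support, w ∈ S := by
  refine ⟨q.map (SimpleGraph.Embedding.induce S).toHom, ?_⟩
  intro w hw
  have hw : w ∈ (q.map (SimpleGraph.Embedding.induce S).toHom).support := hw
  rw [SimpleGraph.Walk.support_map, List.mem_map] at hw
  obtain ⟨x, -, rfl⟩ := hw
  exact x.2

/-- In a tree, a connected set containing the endpoints of a path contains the whole path. -/
lemma path_subset (hG : G.IsTree) {s : Finset V} (hs : (G.induce (s : Set V)).Connected)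
    {u w : V} (hu : u ∈ s) (hw : w ∈ s) (p : G.Walk u w) (hp : p.IsPath) :
    ∀ t ∈ p.support, t ∈ s := by
  have hr : (G.induce (s : Set V)).Reachable ⟨u, hu⟩ ⟨w, hw⟩ := hs.preconnected _ _
  obtain ⟨q⟩ := hr
  obtain ⟨p', hp'⟩ := walk_out q
  have heq : p = p'.bypass := (hG.existsUnique_path u w).unique hp p'.bypass_isPath
  intro t ht
  exact hp' t (p'.support_bypass_subset (heq ▸ ht))

lemma insert_connected {s : Finset V} (hs : (G.induce (s : Set V)).Connected)
    {x y : V} (hx : x ∈ s) (hxy : G.Adj x y) :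
    (G.induce ((insert y s : Finset V) : Set V)).Connected := by
  have hy : y ∈ ((insert y s : Finset V) : Set V) := by simp
  have hx' : x ∈ ((insert y s : Finset V) : Set V) := by simp [hx]
  constructor
  · rintro ⟨a, ha⟩ ⟨b, hb⟩
    have key : ∀ (c : V) (hc : c ∈ ((insert y s : Finset V) : Set V)),
        (G.induce ((insert y s : Finset V) : Set V)).Reachable ⟨c, hc⟩ ⟨x, hx'⟩ := by
      intro c hc
      rcases Finset.mem_insert.1 (by exact_mod_cast hc) with h | h
      · have hcx : G.Adj c x := h ▸ hxy.symm
        have hadj : (G.induce ((insert y s : Finset V) : Set V)).Adj ⟨c, hc⟩ ⟨x, hx'⟩ := hcx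
        exact hadj.reachable
      · obtain ⟨q⟩ := hs.preconnected ⟨c, h⟩ ⟨x, hx⟩
        obtain ⟨p', hp'⟩ := walk_out q
        exact lift_walk p' (fun w hw => by simp [Finset.mem_insert]; tauto)
    exact (key a ha).trans (key b hb).symm

lemma Aset_mono (hG : G.IsTree) {x y z : V} (hxy : G.Adj x y) (hyz : G.Adj y z)
    (hxz : x ≠ z) : (Aset G x y).card ≤ (Aset G y z).card := by
  apply Finset.card_le_card_of_injOn (insert y)
  · intro s hsmem
    simp only [Finset.mem_coe, Aset, Finset.mem_filter, Finset.mem_univ, true_and] at hsmem ⊢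
    obtain ⟨hxs, hys, hconn⟩ := hsmem
    refine ⟨Finset.mem_insert_self _ _, ?_, insert_connected hconn hxs hxy⟩
    intro hz
    rcases Finset.mem_insert.1 hz with h | h
    · exact hyz.ne h.symm
    · -- z ∈ s : then the path x-y-z lies in s, contradiction with y ∉ s
      have hp : (SimpleGraph.Walk.cons hxy (SimpleGraph.Walk.cons hyz
          SimpleGraph.Walk.nil)).IsPath := by
        simp [SimpleGraph.Walk.cons_isPath_iff, hxy.ne, hyz.ne, hxz]
      have := path_subset hG hconn hxs h _ hp y (by simp)
      exact hys this
  · intro s hs t ht hst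
    simp only [Aset, Finset.coe_filter, Set.mem_setOf_eq, Finset.mem_univ, true_and] at hs ht
    have hys : y ∉ s := hs.2.1
    have hyt : y ∉ t := ht.2.1
    rw [← Finset.erase_insert hys, ← Finset.erase_insert hyt, hst]

lemma sigma_diff (hxy : G.Adj x y) :
    (subtreesThrough G x).card + (Aset G y x).card =
      (subtreesThrough G y).card + (Aset G x y).card := by
  classical
  have split : ∀ a b : V,
      (subtreesThrough G a).card =
        (Finset.univ.filter (fun s : Finset V =>
          a ∈ s ∧ b ∈ s ∧ (G.induce (s : Set V)).Connected)).card + (Aset G a b).card := by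
    intro a b
    have h := Finset.card_filter_add_card_filter_not
      (s := subtreesThrough G a) (p := fun s : Finset V => b ∈ s)
    rw [← h]
    congr 1
    · congr 1
      ext s
      simp only [subtreesThrough, Finset.mem_filter, Finset.mem_univ, true_and]
      tauto
    · congr 1
      ext s
      simp only [subtreesThrough, Aset, Finset.mem_filter, Finset.mem_univ, true_and]
      tauto
    
  have hb : (Finset.univ.filter (fun s : Finset V =>
      x ∈ s ∧ y ∈ s ∧ (G.induce (s : Set V)).Connected)) =
      (Finset.univ.filter (fun s : Finset V =>
      y ∈ s ∧ x ∈ s ∧ (G.induce (s : Set V)).Connected)) := by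
    ext s; simp only [Finset.mem_filter]; tauto
  rw [split x y, split y x, hb]
  ring

lemma sigma_decr (hG : G.IsTree) : ∀ {x v : V} (q : G.Walk x v), q.IsPath →
    ∀ u, G.Adj u x → u ∉ q.support → (Aset G x u).card < (Aset G u x).card →
    (subtreesThrough G v).card ≤ (subtreesThrough G x).card := by
  intro x v q
  induction q with
  | nil => intro _ _ _ _ _; exact le_rfl
  | @cons a b c h r ih =>
    intro hq u hux hu hlt
    rw [SimpleGraph.Walk.cons_isPath_iff] at hq
    have hub : u ≠ b := by
      intro h'; exact hu (by simp [h'])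
    have m1 : (Aset G u a).card ≤ (Aset G a b).card := Aset_mono hG hux h hub
    have m2 : (Aset G b a).card ≤ (Aset G a u).card :=
      Aset_mono hG h.symm hux.symm (fun h' => hub h'.symm)
    have hlt2 : (Aset G b a).card < (Aset G a b).card :=
      lt_of_le_of_lt m2 (lt_of_lt_of_le hlt m1)
    have hdiff := sigma_diff (G := G) h
    have hba : (subtreesThrough G b).card ≤ (subtreesThrough G a).card := by omega
    exact le_trans (ih hq.1 a h hq.2 hlt2) hba

lemma sigma_min (hG : G.IsTree) : ∀ {u v : V} (p : G.Walk u v), p.IsPath →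
    ∀ w ∈ p.support,
      min (subtreesThrough G u).card (subtreesThrough G v).card ≤
        (subtreesThrough G w).card := by
  intro u v p
  induction p with
  | nil =>
    intro _ w hw
    rw [SimpleGraph.Walk.support_nil, List.mem_singleton] at hw
    subst hw; exact min_le_left _ _
  | @cons a b c h q ih =>
    intro hp w hw
    rw [SimpleGraph.Walk.cons_isPath_iff] at hp
    have key : min (subtreesThrough G a).card (subtreesThrough G c).card ≤
        (subtreesThrough G b).card := by
      by_cases hab : (subtreesThrough G a).card ≤ (subtreesThrough G b).card
      · exact le_trans (min_le_left _ _) hab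
      · push_neg at hab
        have hdiff := sigma_diff (G := G) h
        have hlt : (Aset G b a).card < (Aset G a b).card := by omega
        have := sigma_decr hG q hp.1 a h hp.2 hlt
        exact le_trans (min_le_right _ _) this
    rw [SimpleGraph.Walk.support_cons, List.mem_cons] at hw
    rcases hw with rfl | hw
    · exact min_le_left _ _
    · exact le_trans (le_min key (min_le_right _ _)) (ih hp.1 w hw)

end Aux

/-- Along any path in a tree `T`, the function `v ↦ σ_v(T)` counting subtrees through
`v` is unimodal: its minimum over the path is attained at an endpoint. Consequently,
for any threshold `c`, the set of vertices `v` with `σ_v(T) ≥ c` induces a connected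
(possibly empty) subgraph of `T`. -/
theorem stmt17 {V : Type*} [Fintype V] (G : SimpleGraph V) (hG : G.IsTree) :
    (∀ (u v : V) (p : G.Walk u v), p.IsPath → ∀ w ∈ p.support,
      min (subtreesThrough G u).card (subtreesThrough G v).card ≤
        (subtreesThrough G w).card) ∧
    (∀ c : ℕ, (G.induce {v : V | c ≤ (subtreesThrough G v).card}).Preconnected) := by
  constructor
  · intro u v p hp w hw
    exact sigma_min hG p hp w hw
  · intro c
    rintro ⟨a, ha⟩ ⟨b, hb⟩
    obtain ⟨q⟩ := hG.isConnected.preconnected a b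
    have hsupp : ∀ w ∈ q.bypass.support, w ∈ {v : V | c ≤ (subtreesThrough G v).card} := by
      intro w hw
      have := sigma_min hG q.bypass q.bypass_isPath w hw
      have hmin : c ≤ min (subtreesThrough G a).card (subtreesThrough G b).card :=
        le_min ha hb
      exact le_trans hmin this
    exact lift_walk q.bypass hsupp
end

section
/- Let T be a tree, v a non-leaf cut configuration given by an edge vw, and B the component of T − vw containing v (rooted at v). If a is the number of subtrees of T − B containing w and b is the number of subtrees of B containing v, then the number of subtrees of T containing v equals (a+1)·b, and the total number of subtrees of T is at least (a+1)(b+1). -/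
open scoped Classical

/-- The side of the edge `vw` containing `v`: the vertices whose every walk to `w`
passes through `v` (the component of `T − vw` containing `v`). -/
def edgeSide {V : Type*} (G : SimpleGraph V) (v w : V) : Set V :=
  {x | ∀ p : G.Walk x w, v ∈ p.support}

section helpers

variable {V : Type*} {G : SimpleGraph V} {v w : V}

lemma aux_induce_conn_iff {s : Set V} :
    (G.induce s).Connected ↔ s.Nonempty ∧
      ∀ x ∈ s, ∀ y ∈ s, ∃ p : G.Walk x y, ∀ z ∈ p.support, z ∈ s := by
  rw [SimpleGraph.connected_induce_iff,
    SimpleGraph.Subgraph.connected_iff_forall_exists_walk_subgraph]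
  simp only [SimpleGraph.Subgraph.induce_verts, SimpleGraph.Subgraph.verts_top]
  constructor
  · rintro ⟨hne, h⟩
    refine ⟨hne, fun x hx y hy => ?_⟩
    obtain ⟨p, hp⟩ := h hx hy
    exact ⟨p, fun z hz => hp.1 (p.mem_verts_toSubgraph.mpr hz)⟩
  · rintro ⟨hne, h⟩
    refine ⟨hne, fun {x y} hx hy => ?_⟩
    obtain ⟨p, hp⟩ := h x hx y hy
    refine ⟨p, ⟨fun z hz => hp z (p.mem_verts_toSubgraph.mp hz), ?_⟩⟩
    intro c d hcd
    rw [SimpleGraph.Subgraph.induce_adj]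
    exact ⟨hp c (p.mem_verts_toSubgraph.mp (p.toSubgraph.edge_vert hcd)),
      hp d (p.mem_verts_toSubgraph.mp (p.toSubgraph.edge_vert hcd.symm)),
      p.toSubgraph.adj_sub hcd⟩

lemma aux_mem_edgeSide : v ∈ edgeSide G v w := fun p => p.start_mem_support

lemma aux_w_not_mem_edgeSide (hvw : G.Adj v w) : w ∉ edgeSide G v w := by
  intro h
  have := h SimpleGraph.Walk.nil
  simp only [SimpleGraph.Walk.support_nil, List.mem_singleton] at this
  exact hvw.ne this

lemma aux_cross (hG : G.IsTree) (hvw : G.Adj v w) {x y : V} (hxy : G.Adj x y)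
    (hx : x ∈ edgeSide G v w) (hy : y ∉ edgeSide G v w) : x = v ∧ y = w := by
  simp only [edgeSide, Set.mem_setOf_eq, not_forall] at hy
  obtain ⟨p, hp⟩ := hy
  have hx' := hx (SimpleGraph.Walk.cons hxy p)
  rw [SimpleGraph.Walk.support_cons, List.mem_cons] at hx'
  have hxv : x = v := by
    rcases hx' with h | h
    · exact h.symm
    · exact absurd h hp
  refine ⟨hxv, ?_⟩
  have hxy' : G.Adj v y := hxv ▸ hxy
  have hvp : v ∉ (p.toPath : G.Walk y w).support :=
    fun hc => hp (p.support_toPath_subset hc)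
  have hq : (SimpleGraph.Walk.cons hxy' (p.toPath : G.Walk y w)).IsPath :=
    (SimpleGraph.Walk.cons_isPath_iff _ _).mpr ⟨(p.toPath).2, hvp⟩
  have huniq := hG.IsAcyclic.path_unique ⟨_, hq⟩ (SimpleGraph.Path.singleton hvw)
  have h1 := congrArg (fun q : G.Path v w => (q : G.Walk v w).support) huniq
  simp only [SimpleGraph.Path.singleton, SimpleGraph.Walk.support_cons,
    SimpleGraph.Walk.support_nil] at h1
  rw [SimpleGraph.Walk.support_eq_cons (p.toPath : G.Walk y w)] at h1
  simp only [List.cons.injEq, and_true, true_and] at h1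
  exact h1.1

lemma aux_cross_walk (hG : G.IsTree) (hvw : G.Adj v w) :
    ∀ {x y : V} (p : G.Walk x y), x ∈ edgeSide G v w → y ∉ edgeSide G v w →
      v ∈ p.support ∧ w ∈ p.support := by
  intro x y p
  induction p with
  | nil => exact fun hx hy => absurd hx hy
  | @cons x b y h q ih =>
    intro hx hy
    rw [SimpleGraph.Walk.support_cons]
    by_cases hb : b ∈ edgeSide G v w
    · obtain ⟨h1, h2⟩ := ih hb hy
      exact ⟨List.mem_cons_of_mem _ h1, List.mem_cons_of_mem _ h2⟩
    · obtain ⟨rfl, rfl⟩ := aux_cross hG hvw h hx hb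
      exact ⟨List.mem_cons_self, List.mem_cons_of_mem _ q.start_mem_support⟩

lemma aux_path_subset_side (hG : G.IsTree) (hvw : G.Adj v w) :
    ∀ {x y : V} (p : G.Walk x y), p.IsPath → x ∈ edgeSide G v w → y ∈ edgeSide G v w →
      ∀ z ∈ p.support, z ∈ edgeSide G v w := by
  intro x y p
  induction p with
  | nil =>
    intro _ hx _ z hz
    simp only [SimpleGraph.Walk.support_nil, List.mem_singleton] at hz
    exact hz ▸ hx
  | @cons x b y h q ih =>
    intro hp hx hy
    have hq : q.IsPath := ((SimpleGraph.Walk.cons_isPath_iff _ _).mp hp).1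
    have hxs : x ∉ q.support := ((SimpleGraph.Walk.cons_isPath_iff _ _).mp hp).2
    by_cases hb : b ∈ edgeSide G v w
    · intro z hz
      rw [SimpleGraph.Walk.support_cons, List.mem_cons] at hz
      rcases hz with rfl | hz
      · exact hx
      · exact ih hq hb hy z hz
    · obtain ⟨rfl, rfl⟩ := aux_cross hG hvw h hx hb
      have hvr := hy q.reverse
      rw [SimpleGraph.Walk.support_reverse, List.mem_reverse] at hvr
      exact absurd hvr hxs

lemma aux_path_subset_compl (hG : G.IsTree) (hvw : G.Adj v w) :
    ∀ {x y : V} (p : G.Walk x y), p.IsPath → x ∉ edgeSide G v w → y ∉ edgeSide G v w →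
      ∀ z ∈ p.support, z ∉ edgeSide G v w := by
  intro x y p
  induction p with
  | nil =>
    intro _ hx _ z hz
    simp only [SimpleGraph.Walk.support_nil, List.mem_singleton] at hz
    exact hz ▸ hx
  | @cons x b y h q ih =>
    intro hp hx hy
    have hq : q.IsPath := ((SimpleGraph.Walk.cons_isPath_iff _ _).mp hp).1
    have hxs : x ∉ q.support := ((SimpleGraph.Walk.cons_isPath_iff _ _).mp hp).2
    by_cases hb : b ∈ edgeSide G v w
    · obtain ⟨rfl, rfl⟩ := aux_cross hG hvw h.symm hb hx
      have : _ ∈ q.support := (aux_cross_walk hG hvw q hb hy).2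
      exact absurd this hxs
    · intro z hz
      rw [SimpleGraph.Walk.support_cons, List.mem_cons] at hz
      rcases hz with rfl | hz
      · exact hx
      · exact ih hq hb hy z hz

lemma aux_conn_inter_side (hG : G.IsTree) (hvw : G.Adj v w) {S : Set V}
    (hv : v ∈ S) (hconn : (G.induce S).Connected) :
    (G.induce (S ∩ edgeSide G v w)).Connected := by
  rw [aux_induce_conn_iff] at hconn ⊢
  refine ⟨⟨v, hv, aux_mem_edgeSide⟩, ?_⟩
  rintro x ⟨hxS, hxB⟩ y ⟨hyS, hyB⟩
  obtain ⟨p, hp⟩ := hconn.2 x hxS y hyS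
  exact ⟨(p.toPath : G.Walk x y), fun z hz => ⟨hp z (p.support_toPath_subset hz),
    aux_path_subset_side hG hvw _ (p.toPath).2 hxB hyB z hz⟩⟩

lemma aux_w_mem (hG : G.IsTree) (hvw : G.Adj v w) {S : Set V}
    (hv : v ∈ S) (hconn : (G.induce S).Connected) {x : V} (hx : x ∈ S)
    (hxB : x ∉ edgeSide G v w) : w ∈ S := by
  rw [aux_induce_conn_iff] at hconn
  obtain ⟨p, hp⟩ := hconn.2 v hv x hx
  exact hp w (aux_cross_walk hG hvw p aux_mem_edgeSide hxB).2

lemma aux_conn_inter_compl (hG : G.IsTree) (hvw : G.Adj v w) {S : Set V}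
    (hconn : (G.induce S).Connected) (hne : (S ∩ (edgeSide G v w)ᶜ).Nonempty) :
    (G.induce (S ∩ (edgeSide G v w)ᶜ)).Connected := by
  rw [aux_induce_conn_iff] at hconn ⊢
  refine ⟨hne, ?_⟩
  rintro x ⟨hxS, hxB⟩ y ⟨hyS, hyB⟩
  obtain ⟨p, hp⟩ := hconn.2 x hxS y hyS
  exact ⟨(p.toPath : G.Walk x y), fun z hz => ⟨hp z (p.support_toPath_subset hz),
    aux_path_subset_compl hG hvw _ (p.toPath).2 hxB hyB z hz⟩⟩

lemma aux_singleton_conn (u : V) : (G.induce (({u} : Finset V) : Set V)).Connected := by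
  rw [aux_induce_conn_iff]
  refine ⟨⟨u, by simp⟩, ?_⟩
  intro x hx y hy
  simp only [Finset.coe_singleton, Set.mem_singleton_iff] at hx hy
  subst hx; subst hy
  exact ⟨SimpleGraph.Walk.nil, by simp⟩

end helpers

/-- Let `T` be a tree with at least 3 vertices, `vw` an edge, and `B` the component of
`T − vw` containing `v`. If `a` is the number of subtrees of `T − B` containing `w` and
`b` is the number of subtrees of `B` containing `v`, then the number of subtrees of `T`
containing `v` equals `(a+1)·b`, and `T` has at least `(a+1)(b+1)` subtrees in total. -/
theorem stmt18 {V : Type*} [Fintype V] (G : SimpleGraph V) (hG : G.IsTree)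
    (h3 : 3 ≤ Fintype.card V) (v w : V) (hvw : G.Adj v w) (a b : ℕ)
    (ha : a = (Finset.univ.filter (fun s : Finset V => w ∈ s ∧
      (s : Set V) ⊆ (edgeSide G v w)ᶜ ∧ (G.induce (s : Set V)).Connected)).card)
    (hb : b = (Finset.univ.filter (fun s : Finset V => v ∈ s ∧
      (s : Set V) ⊆ edgeSide G v w ∧ (G.induce (s : Set V)).Connected)).card) :
    (subtreesThrough G v).card = (a + 1) * b ∧
    (a + 1) * (b + 1) ≤ (subtrees G).card := by
  subst ha hb
  set B : Set V := edgeSide G v w with hB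
  set A : Finset (Finset V) := Finset.univ.filter (fun s : Finset V => w ∈ s ∧
      (s : Set V) ⊆ Bᶜ ∧ (G.induce (s : Set V)).Connected) with hA
  set Bf : Finset (Finset V) := Finset.univ.filter (fun s : Finset V => v ∈ s ∧
      (s : Set V) ⊆ B ∧ (G.induce (s : Set V)).Connected) with hBf
  have hAmem : ∀ s : Finset V, s ∈ A ↔ w ∈ s ∧ (s : Set V) ⊆ Bᶜ ∧
      (G.induce (s : Set V)).Connected := by
    intro s; simp [hA]
  have hBfmem : ∀ s : Finset V, s ∈ Bf ↔ v ∈ s ∧ (s : Set V) ⊆ B ∧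
      (G.induce (s : Set V)).Connected := by
    intro s; simp [hBf]
  have hTmem : ∀ s : Finset V, s ∈ subtreesThrough G v ↔ v ∈ s ∧
      (G.induce (s : Set V)).Connected := by
    intro s; simp [subtreesThrough]
  have hSmem : ∀ s : Finset V, s ∈ subtrees G ↔ s.Nonempty ∧
      (G.induce (s : Set V)).Connected := by
    intro s; simp [subtrees]
  have hempA : (∅ : Finset V) ∉ A := by
    rw [hAmem]; simp
  -- coercion facts
  have hcoe1 : ∀ s : Finset V, ((s.filter (fun x => x ∈ B) : Finset V) : Set V)
      = (s : Set V) ∩ B := by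
    intro s; ext x; simp [Finset.mem_filter]
  have hcoe2 : ∀ s : Finset V, ((s.filter (fun x => x ∉ B) : Finset V) : Set V)
      = (s : Set V) ∩ Bᶜ := by
    intro s; ext x; simp [Finset.mem_filter]
  -- Part 1: bijection
  have key : (subtreesThrough G v).card = ((insert ∅ A) ×ˢ Bf).card := by
    refine Finset.card_bij'
      (fun s _ => (s.filter (fun x => x ∉ B), s.filter (fun x => x ∈ B)))
      (fun p _ => p.1 ∪ p.2) ?_ ?_ ?_ ?_
    · intro s hs
      obtain ⟨hvs, hconn⟩ := (hTmem s).mp hs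
      rw [Finset.mem_product]
      constructor
      · by_cases hemp : s.filter (fun x => x ∉ B) = ∅
        · rw [hemp]; exact Finset.mem_insert_self _ _
        · refine Finset.mem_insert_of_mem ((hAmem _).mpr ?_)
          obtain ⟨x, hx⟩ := Finset.nonempty_iff_ne_empty.mpr hemp
          rw [Finset.mem_filter] at hx
          have hwS : w ∈ (s : Set V) :=
            aux_w_mem hG hvw (Finset.mem_coe.mpr hvs) hconn (Finset.mem_coe.mpr hx.1) hx.2
          refine ⟨?_, ?_, ?_⟩
          · rw [Finset.mem_filter]
            exact ⟨Finset.mem_coe.mp hwS, aux_w_not_mem_edgeSide hvw⟩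
          · rw [hcoe2]; exact Set.inter_subset_right
          · rw [hcoe2]
            refine aux_conn_inter_compl hG hvw hconn ⟨x, Finset.mem_coe.mpr hx.1, hx.2⟩
      · refine (hBfmem _).mpr ⟨?_, ?_, ?_⟩
        · rw [Finset.mem_filter]; exact ⟨hvs, aux_mem_edgeSide⟩
        · rw [hcoe1]; exact Set.inter_subset_right
        · rw [hcoe1]
          exact aux_conn_inter_side hG hvw (Finset.mem_coe.mpr hvs) hconn
    · intro p hp
      rw [Finset.mem_product] at hp
      obtain ⟨hp1, hp2⟩ := hp
      obtain ⟨hv2, hsub2, hconn2⟩ := (hBfmem _).mp hp2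
      refine (hTmem _).mpr ⟨Finset.mem_union_right _ hv2, ?_⟩
      rcases Finset.mem_insert.mp hp1 with hemp | hp1
      · rw [hemp, Finset.empty_union]; exact hconn2
      · obtain ⟨hw1, hsub1, hconn1⟩ := (hAmem _).mp hp1
        rw [Finset.coe_union]
        rw [Set.union_comm]
        exact SimpleGraph.connected_induce_union hconn2.preconnected hconn1.preconnected
          (Finset.mem_coe.mpr hv2) (Finset.mem_coe.mpr hw1) hvw
    · intro s hs
      dsimp only
      ext x
      simp only [Finset.mem_union, Finset.mem_filter]
      by_cases hx : x ∈ B <;> tauto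
    · intro p hp
      rw [Finset.mem_product] at hp
      obtain ⟨hp1, hp2⟩ := hp
      obtain ⟨hv2, hsub2, hconn2⟩ := (hBfmem _).mp hp2
      have h1 : ∀ x ∈ p.1, x ∉ B := by
        rcases Finset.mem_insert.mp hp1 with hemp | hp1
        · rw [hemp]; simp
        · obtain ⟨hw1, hsub1, hconn1⟩ := (hAmem _).mp hp1
          exact fun x hx => hsub1 (Finset.mem_coe.mpr hx)
      have h2 : ∀ x ∈ p.2, x ∈ B := fun x hx => hsub2 (Finset.mem_coe.mpr hx)
      have e1 : (p.1 ∪ p.2).filter (fun x => x ∉ B) = p.1 := by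
        ext x
        simp only [Finset.mem_filter, Finset.mem_union]
        constructor
        · rintro ⟨hx | hx, hxB⟩
          · exact hx
          · exact absurd (h2 x hx) hxB
        · intro hx; exact ⟨Or.inl hx, h1 x hx⟩
      have e2 : (p.1 ∪ p.2).filter (fun x => x ∈ B) = p.2 := by
        ext x
        simp only [Finset.mem_filter, Finset.mem_union]
        constructor
        · rintro ⟨hx | hx, hxB⟩
          · exact absurd hxB (h1 x hx)
          · exact hx
        · intro hx; exact ⟨Or.inr hx, h2 x hx⟩
      exact Prod.ext e1 e2
  have hprod : ((insert ∅ A) ×ˢ Bf).card = (A.card + 1) * Bf.card := by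
    rw [Finset.card_product, Finset.card_insert_of_notMem hempA]
  constructor
  · rw [key, hprod]
  · -- Part 2
    have hsub1 : subtreesThrough G v ⊆ subtrees G := by
      intro s hs
      obtain ⟨hvs, hconn⟩ := (hTmem s).mp hs
      exact (hSmem s).mpr ⟨⟨v, hvs⟩, hconn⟩
    have hsub2 : A ⊆ subtrees G := by
      intro s hs
      obtain ⟨hws, _, hconn⟩ := (hAmem s).mp hs
      exact (hSmem s).mpr ⟨⟨w, hws⟩, hconn⟩
    obtain ⟨u, hu⟩ : ∃ u : V, u ∉ ({v, w} : Finset V) := by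
      by_contra h
      push_neg at h
      have hle : (Finset.univ : Finset V) ⊆ {v, w} := fun u _ => h u
      have := Finset.card_le_card hle
      rw [Finset.card_univ] at this
      have h2 : ({v, w} : Finset V).card ≤ 2 :=
        (Finset.card_insert_le _ _).trans (by simp)
      omega
    simp only [Finset.mem_insert, Finset.mem_singleton, not_or] at hu
    obtain ⟨huv, huw⟩ := hu
    have hsing : ({u} : Finset V) ∈ subtrees G :=
      (hSmem _).mpr ⟨⟨u, Finset.mem_singleton_self u⟩, aux_singleton_conn u⟩
    have d1 : Disjoint (subtreesThrough G v) A := by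
      rw [Finset.disjoint_left]
      intro s hs hsA
      obtain ⟨hvs, _⟩ := (hTmem s).mp hs
      obtain ⟨_, hsub, _⟩ := (hAmem s).mp hsA
      exact hsub (Finset.mem_coe.mpr hvs) aux_mem_edgeSide
    have d2 : Disjoint (subtreesThrough G v ∪ A) ({({u} : Finset V)} : Finset (Finset V)) := by
      rw [Finset.disjoint_right]
      intro s hs hsu
      rw [Finset.mem_singleton] at hs
      subst hs
      rcases Finset.mem_union.mp hsu with h | h
      · obtain ⟨hvs, _⟩ := (hTmem _).mp h
        exact huv (Finset.mem_singleton.mp hvs).symm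
      · obtain ⟨hws, _, _⟩ := (hAmem _).mp h
        exact huw (Finset.mem_singleton.mp hws).symm
    have hsubU : (subtreesThrough G v ∪ A) ∪ ({({u} : Finset V)} : Finset (Finset V))
        ⊆ subtrees G := by
      intro s hs
      rcases Finset.mem_union.mp hs with h | h
      · rcases Finset.mem_union.mp h with h' | h'
        · exact hsub1 h'
        · exact hsub2 h'
      · rw [Finset.mem_singleton] at h; subst h; exact hsing
    have hcard := Finset.card_le_card hsubU
    rw [Finset.card_union_of_disjoint d2, Finset.card_union_of_disjoint d1,
      Finset.card_singleton, key, hprod] at hcard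
    nlinarith [hcard]
end

section
/- The 1-periodic function f defined by f(x) = x − 2^x for x ∈ [0,1] (extended periodically) satisfies: for every integer n ≥ 2, min over positive integers b of (b + n²/2^b) = 2·log₂ n − f(2·log₂ n). -/
/-- Let `f` be the 1-periodic function with `f x = x − 2^x` on `[0,1]`. For every
integer `n ≥ 2`, the minimum over positive integers `b` of `b + n²/2^b` equals
`2·log₂ n − f(2·log₂ n)` (and is attained). -/
theorem stmt19 (f : ℝ → ℝ) (hper : ∀ x, f (x + 1) = f x)
    (hf : ∀ x ∈ Set.Icc (0 : ℝ) 1, f x = x - 2 ^ x)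
    (n : ℕ) (hn : 2 ≤ n) :
    IsLeast {y : ℝ | ∃ b : ℕ, 0 < b ∧ y = (b : ℝ) + (n : ℝ) ^ 2 / 2 ^ b}
      (2 * Real.logb 2 n - f (2 * Real.logb 2 n)) := by
  have hn1 : (1:ℝ) < n := by exact_mod_cast lt_of_lt_of_le one_lt_two hn
  set L : ℝ := 2 * Real.logb 2 n with hLdef
  have h1le : (1:ℝ) ≤ Real.logb 2 n := by
    have : Real.logb 2 2 ≤ Real.logb 2 n := by
      gcongr
      · norm_num
      · exact_mod_cast hn
    simpa using this
  have hL2 : (2:ℝ) ≤ L := by rw [hLdef]; linarith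
  have hc : (2:ℝ) ^ L = (n:ℝ)^2 := by
    have hL : L = Real.logb 2 ((n:ℝ)^2) := by
      rw [Real.logb_pow]; push_cast; ring
    rw [hL, Real.rpow_logb (by norm_num) (by norm_num) (by positivity)]
  set m : ℕ := ⌊L⌋₊ with hm
  have hmL : (m:ℝ) ≤ L := Nat.floor_le (by linarith)
  have hLm : L < m + 1 := Nat.lt_floor_add_one L
  have hm2 : 2 ≤ m := Nat.le_floor (by exact_mod_cast hL2)
  have hshift : ∀ (k : ℕ) (y : ℝ), f (y + k) = f y := by
    intro k
    induction k with
    | zero => simp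
    | succ k ih =>
      intro y
      have : (y + (↑(k+1) : ℝ)) = (y + k) + 1 := by push_cast; ring
      rw [this, hper, ih]
  have hfL : f L = (L - m) - 2 ^ (L - m) := by
    have h1 : f L = f (L - m) := by
      have := hshift m (L - m); rw [sub_add_cancel] at this; exact this
    rw [h1, hf _ ⟨by linarith, by linarith⟩]
  have hval : L - f L = (m:ℝ) + (n:ℝ)^2 / 2 ^ m := by
    rw [hfL]
    have h2 : (2:ℝ) ^ (L - (m:ℝ)) = (n:ℝ)^2 / 2 ^ m := by
      rw [Real.rpow_sub (by norm_num), hc, Real.rpow_natCast]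
    rw [h2]; ring
  have hpowm : ((2:ℝ)^m : ℝ) ≤ (n:ℝ)^2 := by
    rw [← hc, ← Real.rpow_natCast 2 m]
    exact Real.rpow_le_rpow_of_exponent_le one_le_two hmL
  have hpowm1 : (n:ℝ)^2 < (2:ℝ)^(m+1) := by
    rw [← hc, ← Real.rpow_natCast 2 (m+1)]
    apply Real.rpow_lt_rpow_of_exponent_lt one_lt_two
    push_cast; linarith
  set c : ℝ := (n:ℝ)^2 with hcdef
  have hdown : ∀ b : ℕ, b + 1 ≤ m → ((↑(b+1) : ℝ) + c/2^(b+1) : ℝ) ≤ (b:ℝ) + c/2^b := by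
    intro b hb
    have h1 : (2:ℝ)^(b+1) ≤ c := by
      calc (2:ℝ)^(b+1) ≤ (2:ℝ)^m := pow_le_pow_right₀ one_le_two hb
        _ ≤ c := hpowm
    have hp : (0:ℝ) < 2^(b+1) := by positivity
    have h2 : (1:ℝ) ≤ c/2^(b+1) := (one_le_div hp).mpr h1
    have hsplit : c/2^b = 2 * (c/2^(b+1)) := by
      rw [pow_succ]; field_simp
    push_cast
    linarith
  have hup : ∀ b : ℕ, m ≤ b → ((b:ℝ) + c/2^b : ℝ) ≤ (↑(b+1) : ℝ) + c/2^(b+1) := by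
    intro b hb
    have h1 : c ≤ (2:ℝ)^(b+1) := by
      calc c ≤ (2:ℝ)^(m+1) := le_of_lt hpowm1
        _ ≤ (2:ℝ)^(b+1) := pow_le_pow_right₀ one_le_two (by omega)
    have hp : (0:ℝ) < 2^(b+1) := by positivity
    have h2 : c/2^(b+1) ≤ 1 := (div_le_one hp).mpr h1
    have hsplit : c/2^b = 2 * (c/2^(b+1)) := by
      rw [pow_succ]; field_simp
    push_cast
    linarith
  have hA : ∀ k : ℕ, (m:ℝ) + c/2^m ≤ (↑(m+k) : ℝ) + c/2^(m+k) := by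
    intro k
    induction k with
    | zero => simp
    | succ k ih =>
      calc (m:ℝ) + c/2^m ≤ (↑(m+k) : ℝ) + c/2^(m+k) := ih
        _ ≤ (↑(m+k+1) : ℝ) + c/2^(m+k+1) := hup (m+k) (by omega)
  have hB : ∀ k : ℕ, k ≤ m → (m:ℝ) + c/2^m ≤ (↑(m-k) : ℝ) + c/2^(m-k) := by
    intro k
    induction k with
    | zero => intro _; simp
    | succ k ih =>
      intro hk
      have hb : (m - (k+1)) + 1 ≤ m := by omega
      have heq : m - (k+1) + 1 = m - k := by omega
      calc (m:ℝ) + c/2^m ≤ (↑(m-k) : ℝ) + c/2^(m-k) := ih (by omega)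
        _ = (↑(m-(k+1)+1) : ℝ) + c/2^(m-(k+1)+1) := by rw [heq]
        _ ≤ (↑(m-(k+1)) : ℝ) + c/2^(m-(k+1)) := hdown _ hb
  constructor
  · exact ⟨m, by omega, hval.symm ▸ (by linarith [hval] : L - f L = (m:ℝ) + c/2^m)⟩
  · rintro y ⟨b, hb, rfl⟩
    rw [show L - f L = (m:ℝ) + c/2^m from hval]
    rcases le_or_gt b m with h | h
    · have := hB (m - b) (by omega)
      have heq : m - (m - b) = b := by omega
      rwa [heq] at this
    · have := hA (b - m)
      have heq : m + (b - m) = b := by omega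
      rwa [heq] at this
end
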